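/- arXiv:1104.3533 — 2 statements merged into one kernel-verified Lean document; each statement's English description precedes it below -/
import Mathlib

section
/- Let (W,S) be an arbitrary Coxeter system and let w ∈ W. Then w is fully covering (i.e. the number of reflections t with ℓ(wt) = ℓ(w) − 1 equals ℓ(w)) if and only if every line of the standard segment structure of Φ(w) has exactly two points; equivalently, if and only if for every pair of distinct roots α, β ∈ Φ(w), one has span{α, β} ∩ Φ(w) = {α, β}. -/
/-!
Setup: a Coxeter system `cs : CoxeterSystem M W`, a real vector space `V` with a basis
`e : Basis B ℝ V` of simple roots, a symmetric bilinear form `BF` with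
`BF (e i) (e j) = -cos (π / M i j)` (the convention `M i j = 0` means `∞`, and division by
zero in `ℝ` gives `-cos 0 = -1`), and the geometric representation `ρ : W →* (V →ₗ[ℝ] V)`
determined by `ρ (s i) v = v - 2 ⟪α_i, v⟫ • α_i`.
-/

variable {B : Type*} {W : Type*} [Group W] {V : Type*} [AddCommGroup V] [Module ℝ V]

/-- The root system `Φ = {w • α_i}`. -/
def Phi (ρ : W →* V →ₗ[ℝ] V) (e : Module.Basis B ℝ V) : Set V :=
  {v | ∃ (w : W) (i : B), v = ρ w (e i)}

/-- The positive system `Φ⁺`: roots that are nonnegative combinations of the simple roots. -/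
def PhiPos (ρ : W →* V →ₗ[ℝ] V) (e : Module.Basis B ℝ V) : Set V :=
  {v | v ∈ Phi ρ e ∧ ∀ i : B, (0 : ℝ) ≤ e.repr v i}

/-- The negative system `Φ⁻ = -Φ⁺`. -/
def PhiNeg (ρ : W →* V →ₗ[ℝ] V) (e : Module.Basis B ℝ V) : Set V :=
  {v | -v ∈ PhiPos ρ e}

/-- The inversion set `Φ(w) = Φ⁺ ∩ w⁻¹ Φ⁻`. -/
def InvSet (ρ : W →* V →ₗ[ℝ] V) (e : Module.Basis B ℝ V) (w : W) : Set V :=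
  {v | v ∈ PhiPos ρ e ∧ ρ w v ∈ PhiNeg ρ e}

/-- The root sequence `θ̄(x)` of a word `x = (s_1, …, s_n)`:
`θ_k = s_n ⋯ s_{k+1} (α_{s_k})`. -/
noncomputable def rootSeq {M : CoxeterMatrix B} (cs : CoxeterSystem M W) (ρ : W →* V →ₗ[ℝ] V)
    (e : Module.Basis B ℝ V) : List B → List V
  | [] => []
  | i :: t => ρ (cs.wordProd t)⁻¹ (e i) :: rootSeq cs ρ e t

/-- The data `(e, BF, ρ)` forms the geometric representation of the Coxeter system `cs`. -/
def IsGeometricRep {M : CoxeterMatrix B} (cs : CoxeterSystem M W) (e : Module.Basis B ℝ V)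
    (BF : LinearMap.BilinForm ℝ V) (ρ : W →* V →ₗ[ℝ] V) : Prop :=
  (∀ u v : V, BF u v = BF v u) ∧
  (∀ i j : B, BF (e i) (e j) = - Real.cos (Real.pi / (M i j : ℝ))) ∧
  (∀ (i : B) (v : V), ρ (cs.simple i) v = v - (2 * BF (e i) v) • e i)


/-- The reflection `s_α` in a root `α`, acting on `V` by `s_α(v) = v - 2 B(v,α) α`. -/
def reflVec (BF : LinearMap.BilinForm ℝ V) (α v : V) : V :=
  v - (2 * BF v α) • α

/-- An *inversion set* is a subset of `Φ⁺` of the form `span{α,β} ∩ Φ⁺`, where `α, β` are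
roots that are not scalar multiples of one another. -/
def IsInversionSet (ρ : W →* V →ₗ[ℝ] V) (e : Module.Basis B ℝ V) (Ψ : Set V) : Prop :=
  ∃ α β : V, α ∈ Phi ρ e ∧ β ∈ Phi ρ e ∧ (¬ ∃ c : ℝ, β = c • α) ∧
    Ψ = ↑(Submodule.span ℝ ({α, β} : Set V)) ∩ PhiPos ρ e

/-- `γ` is a *canonical simple root* of `Ψ` if `γ ∈ Ψ` and whenever
`γ = a • μ + Σᵢ aᵢ • λᵢ` with `μ, λᵢ ∈ Ψ`, `a > 0` and `aᵢ ≥ 0`, then `μ = γ`. -/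
def IsCanonicalSimpleRoot (Ψ : Set V) (γ : V) : Prop :=
  γ ∈ Ψ ∧ ∀ μ ∈ Ψ, ∀ a : ℝ, 0 < a → ∀ f : V →₀ ℝ,
    (∀ v ∈ f.support, v ∈ Ψ) → (∀ v, 0 ≤ f v) →
    γ = a • μ + f.sum (fun v c => c • v) → μ = γ

/-- The lines of the standard segment structure of `Φ(w)`: the sets `Ψ ∩ Φ(w)` of
cardinality at least 2, as `Ψ` ranges over inversion sets. -/
def SegLines (ρ : W →* V →ₗ[ℝ] V) (e : Module.Basis B ℝ V) (w : W) : Set (Set V) :=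
  {L | (∃ Ψ : Set V, IsInversionSet ρ e Ψ ∧ L = Ψ ∩ InvSet ρ e w) ∧
    ∃ x ∈ L, ∃ y ∈ L, x ≠ y}

section Aux

open Real CoxeterSystem

/-- Chebyshev-like sequence. -/
noncomputable def cheb (lam : ℝ) : ℕ → ℝ
  | 0 => 0
  | 1 => 1
  | (n+2) => lam * cheb lam (n+1) - cheb lam n

@[simp] lemma cheb_zero (lam : ℝ) : cheb lam 0 = 0 := rfl
@[simp] lemma cheb_one (lam : ℝ) : cheb lam 1 = 1 := rfl
lemma cheb_two (lam : ℝ) : cheb lam 2 = lam := by simp [cheb]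
lemma cheb_succ_succ (lam : ℝ) (n : ℕ) :
    cheb lam (n+2) = lam * cheb lam (n+1) - cheb lam n := rfl

lemma pi_div_pos {m : ℕ} (hm : 2 ≤ m) : (0:ℝ) < π / m :=
  div_pos Real.pi_pos (by exact_mod_cast Nat.lt_of_lt_of_le Nat.zero_lt_two hm)

lemma pi_div_lt {m : ℕ} (hm : 2 ≤ m) : π / m < π := by
  rw [div_lt_iff₀ (by exact_mod_cast Nat.lt_of_lt_of_le Nat.zero_lt_two hm : (0:ℝ) < (m:ℝ))]
  nlinarith [Real.pi_pos, mul_le_mul_of_nonneg_left (show (2:ℝ) ≤ (m:ℝ) by exact_mod_cast hm) Real.pi_pos.le]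


lemma cheb_eq_sin {m : ℕ} (hm : 2 ≤ m) (n : ℕ) :
    cheb (2 * Real.cos (π / m)) n = Real.sin (n * (π / m)) / Real.sin (π / m) := by
  have hs : Real.sin (π / m) ≠ 0 :=
    ne_of_gt (Real.sin_pos_of_pos_of_lt_pi (pi_div_pos hm) (pi_div_lt hm))
  induction n using Nat.twoStepInduction with
  | zero => simp
  | one => simp [div_self hs]
  | more n ih1 ih2 =>
    rw [cheb_succ_succ, ih1, ih2]
    rw [show ((n + 2 : ℕ) : ℝ) * (π / m) = (n+1) * (π/m) + (π/m) by push_cast; ring]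
    rw [show ((n : ℕ) : ℝ) * (π / m) = ((n+1 : ℕ)) * (π/m) - (π/m) by push_cast; ring]
    rw [Real.sin_add, Real.sin_sub]
    push_cast
    field_simp
    ring

lemma cheb_nonneg_of_le {m : ℕ} (hm : 2 ≤ m) {n : ℕ} (hn : n ≤ m) :
    0 ≤ cheb (2 * Real.cos (π / m)) n := by
  rw [cheb_eq_sin hm]
  apply div_nonneg _ (le_of_lt (Real.sin_pos_of_pos_of_lt_pi (pi_div_pos hm) (pi_div_lt hm)))
  apply Real.sin_nonneg_of_nonneg_of_le_pi
  · positivity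
  · calc (n:ℝ) * (π/m) ≤ (m:ℝ) * (π/m) := by
          apply mul_le_mul_of_nonneg_right _ (pi_div_pos hm).le
          exact_mod_cast hn
      _ = π := by
          field_simp

lemma cheb_nonneg_mono {lam : ℝ} (hlam : 2 ≤ lam) (n : ℕ) :
    0 ≤ cheb lam n ∧ cheb lam n ≤ cheb lam (n+1) := by
  induction n with
  | zero => simp
  | succ n ih =>
    obtain ⟨h1, h2⟩ := ih
    have h3 : 0 ≤ cheb lam (n+1) := h1.trans h2
    refine ⟨h3, ?_⟩
    rw [cheb_succ_succ]
    nlinarith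

end Aux
section Geo

open Real CoxeterSystem

variable {M : CoxeterMatrix B} (cs : CoxeterSystem M W) (e : Module.Basis B ℝ V)
  (BF : LinearMap.BilinForm ℝ V) (ρ : W →* V →ₗ[ℝ] V)

local prefix:100 "s" => cs.simple
local prefix:100 "π" => cs.wordProd
local prefix:100 "ℓ" => cs.length

variable {cs e BF ρ}

lemma bf_symm (h : IsGeometricRep cs e BF ρ) (u v : V) : BF u v = BF v u := h.1 u v

lemma bf_self (h : IsGeometricRep cs e BF ρ) (i : B) : BF (e i) (e i) = 1 := by
  rw [h.2.1 i i, M.diagonal i]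
  norm_num

lemma rho_s_apply (h : IsGeometricRep cs e BF ρ) (i : B) (v : V) :
    ρ (s i) v = v - (2 * BF (e i) v) • e i := h.2.2 i v

lemma rho_s_self (h : IsGeometricRep cs e BF ρ) (i : B) : ρ (s i) (e i) = - e i := by
  rw [rho_s_apply h, bf_self h]
  rw [show (2 * (1:ℝ)) • e i = e i + e i by rw [mul_one, two_smul]]
  abel

lemma rho_s_other (h : IsGeometricRep cs e BF ρ) (i j : B) :
    ρ (s i) (e j) = e j + (2 * Real.cos (Real.pi / (M i j : ℝ))) • e i := by
  rw [rho_s_apply h, h.2.1 i j]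
  rw [show 2 * -Real.cos (Real.pi / (M i j:ℝ)) = -(2 * Real.cos (Real.pi / (M i j:ℝ))) by ring]
  rw [neg_smul]
  abel

lemma bf_inv_simple (h : IsGeometricRep cs e BF ρ) (i : B) (u v : V) :
    BF (ρ (s i) u) (ρ (s i) v) = BF u v := by
  rw [rho_s_apply h, rho_s_apply h]
  have h1 : BF (e i) (e i) = 1 := bf_self h i
  have h2 : BF u (e i) = BF (e i) u := h.1 u (e i)
  have h3 : BF v (e i) = BF (e i) v := h.1 v (e i)
  simp only [map_sub, map_smul, LinearMap.sub_apply, LinearMap.smul_apply, smul_eq_mul,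
    h1, h2, h3]
  ring

lemma bf_inv (h : IsGeometricRep cs e BF ρ) (w : W) (u v : V) :
    BF (ρ w u) (ρ w v) = BF u v := by
  obtain ⟨ω, -, rfl⟩ := cs.exists_reduced_word' w
  induction ω generalizing u v with
  | nil => simp [CoxeterSystem.wordProd_nil]
  | cons i t ih =>
    rw [wordProd_cons, map_mul]
    simp only [Module.End.mul_apply]
    rw [bf_inv_simple h, ih]

lemma phi_inv (h : IsGeometricRep cs e BF ρ) {v : V} (hv : v ∈ Phi ρ e) (u : W) :
    ρ u v ∈ Phi ρ e := by
  obtain ⟨w, i, rfl⟩ := hv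
  exact ⟨u * w, i, by rw [map_mul]; rfl⟩

lemma phi_neg (h : IsGeometricRep cs e BF ρ) {v : V} (hv : v ∈ Phi ρ e) : -v ∈ Phi ρ e := by
  obtain ⟨w, i, rfl⟩ := hv
  refine ⟨w * s i, i, ?_⟩
  rw [map_mul]
  simp only [Module.End.mul_apply]
  rw [rho_s_self h, map_neg]

lemma phi_unit (h : IsGeometricRep cs e BF ρ) {v : V} (hv : v ∈ Phi ρ e) : BF v v = 1 := by
  obtain ⟨w, i, rfl⟩ := hv
  rw [bf_inv h, bf_self h]

lemma phi_ne_zero (h : IsGeometricRep cs e BF ρ) {v : V} (hv : v ∈ Phi ρ e) : v ≠ 0 := by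
  intro h0
  have := phi_unit h hv
  rw [h0] at this
  simp at this

lemma simple_mem_phi (i : B) : e i ∈ Phi ρ e := ⟨1, i, by simp⟩

lemma pos_neg_disjoint (h : IsGeometricRep cs e BF ρ) {v : V} (hv : v ∈ PhiPos ρ e) :
    v ∉ PhiNeg ρ e := by
  intro hneg
  apply phi_ne_zero h hv.1
  have : ∀ i, e.repr v i = 0 := by
    intro i
    have h1 := hv.2 i
    have h2 := hneg.2 i
    rw [map_neg] at h2
    simp only [Finsupp.coe_neg, Pi.neg_apply] at h2
    linarith
  apply e.repr.map_eq_zero_iff.mp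
  ext i
  simp [this i]

/-- The fundamental rank-2 computation. -/
lemma rho_alt_apply (h : IsGeometricRep cs e BF ρ) (i j : B) (k : ℕ) :
    ρ (π (alternatingWord i j k)) (e i) =
      (if Even k then cheb (2 * Real.cos (Real.pi / (M i j : ℝ))) (k+1)
        else cheb (2 * Real.cos (Real.pi / (M i j : ℝ))) k) • e i
      + (if Even k then cheb (2 * Real.cos (Real.pi / (M i j : ℝ))) k
        else cheb (2 * Real.cos (Real.pi / (M i j : ℝ))) (k+1)) • e j := by
  set lam := 2 * Real.cos (Real.pi / (M i j : ℝ)) with hlam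
  induction k with
  | zero =>
    rw [show alternatingWord i j 0 = [] from rfl, CoxeterSystem.wordProd_nil]
    simp
  | succ k ih =>
    rw [alternatingWord_succ']
    rcases Nat.even_or_odd k with hk | hk
    · have hk1 : ¬ Even (k+1) := by simp [Nat.even_add_one, hk]
      simp only [if_pos hk]
      rw [wordProd_cons, map_mul]
      simp only [Module.End.mul_apply]
      rw [ih]
      simp only [if_pos hk, if_neg hk1]
      rw [map_add, map_smul, map_smul, rho_s_other h j i, rho_s_self h j]
      have hsy : (2 : ℝ) * Real.cos (Real.pi / (M j i : ℝ)) = lam := by rw [M.symmetric j i]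
      rw [hsy, cheb_succ_succ]
      rw [smul_add, smul_smul, smul_neg]
      module
    · have hk0 : ¬ Even k := by rw [Nat.even_iff]; rw [Nat.odd_iff] at hk; omega
      have hk1 : Even (k+1) := Nat.even_add_one.mpr hk0
      simp only [if_neg hk0]
      rw [wordProd_cons, map_mul]
      simp only [Module.End.mul_apply]
      rw [ih]
      simp only [if_neg hk0, if_pos hk1]
      rw [map_add, map_smul, map_smul, rho_s_self h i, rho_s_other h i j]
      rw [cheb_succ_succ]
      rw [smul_add, smul_smul, smul_neg]
      module

end Geo
section PL

open Real CoxeterSystem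

variable {M : CoxeterMatrix B} {cs : CoxeterSystem M W} {e : Module.Basis B ℝ V}
  {BF : LinearMap.BilinForm ℝ V} {ρ : W →* V →ₗ[ℝ] V}

local prefix:100 "s" => cs.simple
local prefix:100 "π" => cs.wordProd
local prefix:100 "ℓ" => cs.length

lemma rho_alt_nonneg (h : IsGeometricRep cs e BF ρ) (i j : B) (hij : i ≠ j) (k : ℕ)
    (hk : k + 1 ≤ M i j ∨ M i j = 0) :
    ∃ a b : ℝ, 0 ≤ a ∧ 0 ≤ b ∧
      ρ (π (alternatingWord i j k)) (e i) = a • e i + b • e j := by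
  rcases hk with hk | hk
  · have hm2 : 2 ≤ M i j := by
      have h1 := M.off_diagonal i j hij
      omega
    refine ⟨_, _, ?_, ?_, rho_alt_apply h i j k⟩ <;> split <;>
      [exact cheb_nonneg_of_le hm2 hk; exact cheb_nonneg_of_le hm2 (by omega);
       exact cheb_nonneg_of_le hm2 (by omega); exact cheb_nonneg_of_le hm2 hk]
  · have hlam : (2:ℝ) ≤ 2 * Real.cos (Real.pi / (M i j : ℝ)) := by
      rw [hk]
      norm_num
    refine ⟨_, _, ?_, ?_, rho_alt_apply h i j k⟩ <;> split <;>
      first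
      | exact (cheb_nonneg_mono hlam _).1

theorem pl (h : IsGeometricRep cs e BF ρ) :
    ∀ (w : W) (i : B), ℓ w < ℓ (w * s i) → ∀ b : B, 0 ≤ e.repr (ρ w (e i)) b := by
  suffices H : ∀ (n : ℕ) (w : W) (i : B), ℓ w = n → ℓ w < ℓ (w * s i) →
      ∀ b : B, 0 ≤ e.repr (ρ w (e i)) b by
    intro w i hwi
    exact H (ℓ w) w i rfl hwi
  intro n
  induction n using Nat.strong_induction_on with
  | _ n IH =>
  intro w i hw hasc bb
  classical
  by_cases hw1 : w = 1
  · subst hw1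
    simp only [map_one, Module.End.one_apply, Module.Basis.repr_self]
    rw [Finsupp.single_apply]
    split <;> norm_num
  obtain ⟨j, hj⟩ := cs.exists_rightDescent_of_ne_one hw1
  have hij : i ≠ j := by
    rintro rfl
    have : ℓ (w * s i) < ℓ w := hj
    omega
  -- the walk
  have walk : ∀ (l : ℕ) (v : W) (k : ℕ), ℓ v = l → 1 ≤ k →
      w = v * π (alternatingWord i j k) → ℓ v + k = n →
      ∀ b : B, 0 ≤ e.repr (ρ w (e i)) b := by
    intro l
    induction l using Nat.strong_induction_on with
    | _ l IHl =>
    intro v k hv hk1 hweq hsum b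
    set c : B := if Even k then j else i with hc
    by_cases hdesc : ℓ (v * s c) < ℓ v
    · -- continue walking
      have hvc : ℓ (v * s c) + 1 = ℓ v :=
        (cs.length_mul_simple v c).resolve_left (by omega)
      have halt : alternatingWord i j (k+1) = c :: alternatingWord i j k :=
        alternatingWord_succ' i j k
      refine IHl (ℓ (v * s c)) (by omega) (v * s c) (k+1) rfl (by omega) ?_ (by omega) b
      rw [halt, wordProd_cons, ← mul_assoc, mul_assoc v, simple_mul_simple_self, mul_one]
      exact hweq
    · -- stop
      have hstop : ℓ v < ℓ (v * s c) := by
        rcases Nat.lt_or_gt_of_ne (cs.length_mul_simple_ne v c) with h' | h'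
        · omega
        · exact h'
      obtain ⟨k', rfl⟩ : ∃ k', k = k' + 1 := ⟨k - 1, by omega⟩
      set d : B := if Even k' then j else i with hd
      have halt : alternatingWord i j (k'+1) = d :: alternatingWord i j k' :=
        alternatingWord_succ' i j k'
      have hwd : w = (v * s d) * π (alternatingWord i j k') := by
        rw [hweq, halt, wordProd_cons, mul_assoc]
      have hvd : ℓ v < ℓ (v * s d) := by
        have h1 : ℓ w ≤ ℓ (v * s d) + ℓ (π (alternatingWord i j k')) := by
          rw [hwd]; exact cs.length_mul_le _ _
        have h2 : ℓ (π (alternatingWord i j k')) ≤ k' := by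
          simpa [length_alternatingWord] using cs.length_wordProd_le (alternatingWord i j k')
        omega
      -- both ascents at i and j
      have hcd : (c = i ∧ d = j) ∨ (c = j ∧ d = i) := by
        rcases Nat.even_or_odd k' with hk' | hk'
        · have : ¬ Even (k' + 1) := by simp [Nat.even_add_one, hk']
          left
          constructor
          · rw [hc, if_neg this]
          · rw [hd, if_pos hk']
        · have h1 : ¬ Even k' := by rw [Nat.even_iff]; rw [Nat.odd_iff] at hk'; omega
          have h2 : Even (k' + 1) := Nat.even_add_one.mpr h1
          right
          constructor
          · rw [hc, if_pos h2]
          · rw [hd, if_neg h1]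
      have hasci : ℓ v < ℓ (v * s i) := by
        rcases hcd with ⟨h1, h2⟩ | ⟨h1, h2⟩
        · rwa [h1] at hstop
        · rwa [h2] at hvd
      have hascj : ℓ v < ℓ (v * s j) := by
        rcases hcd with ⟨h1, h2⟩ | ⟨h1, h2⟩
        · rwa [h2] at hvd
        · rwa [h1] at hstop
      -- the alternating word is reduced
      have hred : ℓ (π (alternatingWord i j (k'+1))) = k' + 1 := by
        have h1 : ℓ w ≤ ℓ v + ℓ (π (alternatingWord i j (k'+1))) := by
          rw [hweq]; exact cs.length_mul_le _ _
        have h2 : ℓ (π (alternatingWord i j (k'+1))) ≤ k' + 1 := by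
          simpa [length_alternatingWord] using cs.length_wordProd_le (alternatingWord i j (k'+1))
        omega
      -- range bound
      have hrange : k' + 1 + 1 ≤ M i j ∨ M i j = 0 := by
        by_cases hM : M i j = 0
        · right; exact hM
        left
        have hred' : cs.IsReduced (alternatingWord i j (k'+1)) := by
          rw [CoxeterSystem.IsReduced, length_alternatingWord]
          exact hred
        have hle : k' + 1 ≤ M i j := by
          by_contra hgt
          exact (cs.not_isReduced_alternatingWord i j hM (by omega)) hred'
        rcases Nat.lt_or_ge (k' + 1) (M i j) with h' | h'
        · omega
        exfalso
        -- k' + 1 = M i j : use the braid relation to contradict hasc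
        have hkm : k' + 1 = M i j := by omega
        have hbraid : π (alternatingWord i j (k'+1)) * s i = π (alternatingWord i j k') := by
          have h1 : alternatingWord j i (k'+1) = (alternatingWord i j k').concat i :=
            alternatingWord_succ j i k'
          have hkm2 : k' + 1 = M j i := hkm.trans (M.symmetric i j)
          have h2 : π (alternatingWord i j (k'+1)) = π (alternatingWord j i (k'+1)) := by
            conv_lhs => rw [hkm]
            conv_rhs => rw [hkm2]
            exact cs.wordProd_braidWord_eq i j
          rw [h2, h1, wordProd_concat, mul_assoc, simple_mul_simple_self, mul_one]
        have h3 : ℓ (w * s i) ≤ ℓ v + k' := by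
          have : w * s i = v * π (alternatingWord i j k') := by
            rw [hweq, mul_assoc, hbraid]
          rw [this]
          have h2 : ℓ (π (alternatingWord i j k')) ≤ k' := by
            simpa [length_alternatingWord] using cs.length_wordProd_le (alternatingWord i j k')
          calc ℓ (v * π (alternatingWord i j k')) ≤ ℓ v + ℓ (π (alternatingWord i j k')) :=
                cs.length_mul_le _ _
            _ ≤ ℓ v + k' := by omega
        omega
      obtain ⟨a, b', ha, hb', heq⟩ := rho_alt_nonneg h i j hij (k'+1) hrange
      rw [hweq, map_mul]
      simp only [Module.End.mul_apply]
      rw [heq, map_add, map_smul, map_smul, map_add, map_smul, map_smul]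
      simp only [Finsupp.coe_add, Finsupp.coe_smul, Pi.add_apply, Pi.smul_apply, smul_eq_mul]
      have hi' : 0 ≤ e.repr (ρ v (e i)) b := IH (ℓ v) (by omega) v i rfl hasci b
      have hj' : 0 ≤ e.repr (ρ v (e j)) b := IH (ℓ v) (by omega) v j rfl hascj b
      positivity
  -- kick off the walk
  have hwj : ℓ (w * s j) + 1 = ℓ w :=
    (cs.length_mul_simple w j).resolve_left (by have : ℓ (w * s j) < ℓ w := hj; omega)
  refine walk (ℓ (w * s j)) (w * s j) 1 rfl le_rfl ?_ (by omega) bb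
  have h1 : alternatingWord i j 1 = [j] := rfl
  rw [h1]
  rw [show cs.wordProd [j] = s j by simp [wordProd]]
  rw [mul_assoc, simple_mul_simple_self, mul_one]

end PL
section Cor

open Real CoxeterSystem

variable {M : CoxeterMatrix B} {cs : CoxeterSystem M W} {e : Module.Basis B ℝ V}
  {BF : LinearMap.BilinForm ℝ V} {ρ : W →* V →ₗ[ℝ] V}

local prefix:100 "s" => cs.simple
local prefix:100 "π" => cs.wordProd
local prefix:100 "ℓ" => cs.length

lemma pl_pos (h : IsGeometricRep cs e BF ρ) {w : W} {i : B} (hasc : ℓ w < ℓ (w * s i)) :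
    ρ w (e i) ∈ PhiPos ρ e :=
  ⟨⟨w, i, rfl⟩, pl h w i hasc⟩

lemma pl_neg (h : IsGeometricRep cs e BF ρ) {w : W} {i : B} (hdesc : ℓ (w * s i) < ℓ w) :
    ρ w (e i) ∈ PhiNeg ρ e := by
  have hasc : ℓ (w * s i) < ℓ ((w * s i) * s i) := by
    rwa [mul_assoc, simple_mul_simple_self, mul_one]
  have hpos := pl_pos h hasc
  have heq : - ρ w (e i) = ρ (w * s i) (e i) := by
    rw [map_mul]
    simp only [Module.End.mul_apply]
    rw [rho_s_self h, map_neg]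
  show - ρ w (e i) ∈ PhiPos ρ e
  rw [heq]
  exact hpos

lemma phi_pos_or_neg (h : IsGeometricRep cs e BF ρ) {v : V} (hv : v ∈ Phi ρ e) :
    v ∈ PhiPos ρ e ∨ v ∈ PhiNeg ρ e := by
  obtain ⟨w, i, rfl⟩ := hv
  rcases Nat.lt_or_gt_of_ne (cs.length_mul_simple_ne w i) with h' | h'
  · exact Or.inr (pl_neg h h')
  · exact Or.inl (pl_pos h h')

lemma neg_mem_phiNeg (h : IsGeometricRep cs e BF ρ) {v : V} (hv : v ∈ PhiPos ρ e) :
    -v ∈ PhiNeg ρ e := by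
  rw [PhiNeg, Set.mem_setOf_eq, neg_neg]; exact hv

lemma neg_mem_phiPos (h : IsGeometricRep cs e BF ρ) {v : V} (hv : v ∈ PhiNeg ρ e) :
    -v ∈ PhiPos ρ e := hv

lemma phiPos_subset_phi {v : V} (hv : v ∈ PhiPos ρ e) : v ∈ Phi ρ e := hv.1

lemma phiNeg_subset_phi (h : IsGeometricRep cs e BF ρ) {v : V} (hv : v ∈ PhiNeg ρ e) :
    v ∈ Phi ρ e := by
  have := phi_neg h (hv.1 : -v ∈ Phi ρ e)
  rwa [neg_neg] at this

lemma not_pos_of_neg (h : IsGeometricRep cs e BF ρ) {v : V} (hv : v ∈ PhiNeg ρ e) :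
    v ∉ PhiPos ρ e := fun hp => pos_neg_disjoint h hp hv

lemma ascent_iff (h : IsGeometricRep cs e BF ρ) (w : W) (i : B) :
    ℓ w < ℓ (w * s i) ↔ ρ w (e i) ∈ PhiPos ρ e := by
  constructor
  · exact pl_pos h
  · intro hpos
    rcases Nat.lt_or_gt_of_ne (cs.length_mul_simple_ne w i) with h' | h'
    · exact absurd hpos (not_pos_of_neg h (pl_neg h h'))
    · exact h'

lemma descent_iff (h : IsGeometricRep cs e BF ρ) (w : W) (i : B) :
    ℓ (w * s i) < ℓ w ↔ ρ w (e i) ∈ PhiNeg ρ e := by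
  constructor
  · exact pl_neg h
  · intro hneg
    rcases Nat.lt_or_gt_of_ne (cs.length_mul_simple_ne w i) with h' | h'
    · exact h'
    · exact absurd (pl_pos h h') (fun hp => pos_neg_disjoint h hp hneg)

lemma simple_mem_phiPos (i : B) : e i ∈ PhiPos ρ e := by
  classical
  refine ⟨⟨1, i, by simp⟩, fun j => ?_⟩
  rw [Module.Basis.repr_self, Finsupp.single_apply]
  split <;> norm_num

/-- ρ is faithful. -/
lemma rho_faithful (h : IsGeometricRep cs e BF ρ) {w : W} (hw : ρ w = 1) : w = 1 := by
  by_contra hne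
  obtain ⟨j, hj⟩ := cs.exists_rightDescent_of_ne_one hne
  have := pl_neg h (hj : ℓ (w * s j) < ℓ w)
  rw [hw] at this
  simp only [Module.End.one_apply] at this
  exact pos_neg_disjoint h (simple_mem_phiPos j) this

lemma rho_inj (h : IsGeometricRep cs e BF ρ) {w w' : W} (hw : ρ w = ρ w') : w = w' := by
  have h1 : ρ (w * w'⁻¹) = 1 := by
    have : ρ w * ρ w'⁻¹ = ρ w' * ρ w'⁻¹ := by rw [hw]
    rw [← map_mul, ← map_mul, mul_inv_cancel, map_one] at this
    rw [map_mul, ← map_mul, this]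
  have h2 := rho_faithful h h1
  have : w * w'⁻¹ * w' = 1 * w' := by rw [h2]
  rwa [inv_mul_cancel_right, one_mul] at this

/-- scalar rigidity: two proportional positive roots are equal -/
lemma phiPos_smul_rigid (h : IsGeometricRep cs e BF ρ) {v : V} {c : ℝ}
    (hv : v ∈ PhiPos ρ e) (hcv : c • v ∈ PhiPos ρ e) : c • v = v := by
  have h1 : BF v v = 1 := phi_unit h hv.1
  have h2 : BF (c • v) (c • v) = 1 := phi_unit h hcv.1
  simp only [map_smul, LinearMap.smul_apply, smul_eq_mul, h1] at h2
  have hc : c = 1 ∨ c = -1 := by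
    rcases mul_self_eq_one_iff.mp (by linarith : c * c = 1) with h' | h'
    · exact Or.inl h'
    · exact Or.inr h'
  rcases hc with rfl | rfl
  · rw [one_smul]
  · exfalso
    apply pos_neg_disjoint h hv
    have h3 := hcv
    rw [show (-1 : ℝ) • v = -v by module] at h3
    exact h3

/-- the reflection formula for conjugates of simple reflections -/
lemma rho_conj_formula (h : IsGeometricRep cs e BF ρ) (w : W) (i : B) (x : V) :
    ρ (w * s i * w⁻¹) x = x - (2 * BF (ρ w (e i)) x) • ρ w (e i) := by
  rw [map_mul, map_mul]
  simp only [Module.End.mul_apply]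
  rw [rho_s_apply h]
  rw [map_sub, map_smul]
  have h1 : ρ w (ρ w⁻¹ x) = x := by
    rw [← Module.End.mul_apply, ← map_mul, mul_inv_cancel, map_one, Module.End.one_apply]
  rw [h1]
  have h2 : BF (e i) (ρ w⁻¹ x) = BF (ρ w (e i)) x := by
    calc BF (e i) (ρ w⁻¹ x) = BF (ρ w (e i)) (ρ w (ρ w⁻¹ x)) := (bf_inv h w _ _).symm
      _ = BF (ρ w (e i)) x := by rw [h1]
  rw [h2]

/-- reflection in a unit vector maps it to its negative -/
lemma refl_formula_self (h : IsGeometricRep cs e BF ρ) {t : W} {v : V}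
    (hv : BF v v = 1) (hf : ∀ x, ρ t x = x - (2 * BF v x) • v) : ρ t v = -v := by
  rw [hf v, hv]
  module

end Cor
section Bridge

open Real CoxeterSystem List

variable {M : CoxeterMatrix B} {cs : CoxeterSystem M W} {e : Module.Basis B ℝ V}
  {BF : LinearMap.BilinForm ℝ V} {ρ : W →* V →ₗ[ℝ] V}

local prefix:100 "s" => cs.simple
local prefix:100 "π" => cs.wordProd
local prefix:100 "ℓ" => cs.length

/-- reflection in an arbitrary positive root exists. -/
lemma refl_exists_root (h : IsGeometricRep cs e BF ρ) {t : W} (ht : cs.IsReflection t) :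
    ∃ v, v ∈ PhiPos ρ e ∧ (∀ x, ρ t x = x - (2 * BF v x) • v) := by
  obtain ⟨w, i, rfl⟩ := ht
  rcases phi_pos_or_neg h (⟨w, i, rfl⟩ : ρ w (e i) ∈ Phi ρ e) with hp | hn
  · exact ⟨ρ w (e i), hp, rho_conj_formula h w i⟩
  · refine ⟨-ρ w (e i), neg_mem_phiPos h hn, fun x => ?_⟩
    rw [rho_conj_formula h w i x]
    have : BF (-ρ w (e i)) x = - BF (ρ w (e i)) x := by
      rw [map_neg]
      rfl
    rw [this]
    module

lemma root_unique (h : IsGeometricRep cs e BF ρ) {t : W} {v v' : V}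
    (hv : v ∈ PhiPos ρ e) (hv' : v' ∈ PhiPos ρ e)
    (hf : ∀ x, ρ t x = x - (2 * BF v x) • v)
    (hf' : ∀ x, ρ t x = x - (2 * BF v' x) • v') : v = v' := by
  have h4 : v' - (2 * BF v v') • v = -v' := by
    rw [← hf v', hf' v', phi_unit h hv'.1]
    module
  have h5 : v' = (BF v v') • v := by
    have h6 : (2:ℝ) • (v' - (BF v v') • v) = (v' - (2 * BF v v') • v) + v' := by module
    rw [h4] at h6
    simp only [neg_add_cancel] at h6
    rcases smul_eq_zero.mp h6 with h7 | h7
    · norm_num at h7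
    · rw [sub_eq_zero] at h7
      exact h7
  rw [h5] at hv' ⊢
  exact (phiPos_smul_rigid h hv hv').symm

lemma refl_of_root (h : IsGeometricRep cs e BF ρ) {v : V} (hv : v ∈ PhiPos ρ e) :
    ∃ t : W, cs.IsReflection t ∧ (∀ x, ρ t x = x - (2 * BF v x) • v) := by
  obtain ⟨w, i, hwi⟩ := hv.1
  exact ⟨w * s i * w⁻¹, ⟨w, i, rfl⟩, by rw [hwi]; exact rho_conj_formula h w i⟩

lemma refl_eq_of_same_root (h : IsGeometricRep cs e BF ρ) {t t' : W} {v : V}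
    (hf : ∀ x, ρ t x = x - (2 * BF v x) • v)
    (hf' : ∀ x, ρ t' x = x - (2 * BF v x) • v) : t = t' := by
  apply rho_inj h
  ext x
  rw [hf x, hf' x]

lemma simple_perm (h : IsGeometricRep cs e BF ρ) {i : B} {u : V}
    (hu : u ∈ PhiPos ρ e) (hne : u ≠ e i) : ρ (s i) u ∈ PhiPos ρ e := by
  classical
  have hcases : (∃ j, j ≠ i ∧ 0 < e.repr u j) ∨ (∀ j, j ≠ i → e.repr u j = 0) := by
    by_cases hc : ∀ j, j ≠ i → e.repr u j = 0
    · exact Or.inr hc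
    · push_neg at hc
      obtain ⟨j, hj1, hj2⟩ := hc
      exact Or.inl ⟨j, hj1, lt_of_le_of_ne (hu.2 j) (Ne.symm hj2)⟩
  rcases hcases with ⟨j, hji, hjpos⟩ | hall
  · -- there is a positive coordinate away from i; it is preserved
    have hphi : ρ (s i) u ∈ Phi ρ e := phi_inv h hu.1 _
    rcases phi_pos_or_neg h hphi with hp | hn
    · exact hp
    · exfalso
      have hcoord : e.repr (ρ (s i) u) j = e.repr u j := by
        rw [rho_s_apply h]
        rw [map_sub, map_smul]
        simp only [Finsupp.coe_sub, Finsupp.coe_smul, Pi.sub_apply, Pi.smul_apply,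
          smul_eq_mul, Module.Basis.repr_self]
        rw [Finsupp.single_apply, if_neg (Ne.symm hji)]
        ring
      have := hn.2 j
      rw [map_neg] at this
      simp only [Finsupp.coe_neg, Pi.neg_apply] at this
      rw [hcoord] at this
      linarith
  · -- u is supported on i only, so u = e i
    exfalso
    apply hne
    set c := e.repr u i with hc
    have hrepr : e.repr u = c • Finsupp.single i 1 := by
      ext j
      by_cases hji : j = i
      · subst hji
        simp [hc]
      · rw [hall j hji]
        simp [Finsupp.single_apply, Ne.symm hji, hji]
    have hu_eq : u = c • e i := by
      have h1 : u = e.repr.symm (e.repr u) := (e.repr.symm_apply_apply u).symm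
      rw [hrepr, map_smul] at h1
      have h2 : e.repr.symm (Finsupp.single i 1) = e i := by
        have := e.repr_self i
        rw [← this, e.repr.symm_apply_apply]
      rw [h2] at h1
      exact h1
    have hunit : BF u u = 1 := phi_unit h hu.1
    rw [hu_eq] at hunit
    simp only [map_smul, LinearMap.smul_apply, smul_eq_mul, bf_self h i] at hunit
    have hcpos : 0 ≤ c := hu.2 i
    have : c = 1 := by nlinarith
    rw [hu_eq, this, one_smul]

lemma rootSeq_cons (i : B) (t : List B) :
    rootSeq cs ρ e (i :: t) = ρ (π t)⁻¹ (e i) :: rootSeq cs ρ e t := rfl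

lemma mem_invSet_of_mem_rootSeq (h : IsGeometricRep cs e BF ρ) {ω : List B}
    (hω : cs.IsReduced ω) {v : V} (hv : v ∈ rootSeq cs ρ e ω) : v ∈ InvSet ρ e (π ω) := by
  induction ω with
  | nil => simp [rootSeq] at hv
  | cons i t ih =>
    have hred : cs.IsReduced t := by
      have := hω.drop 1
      simpa using this
    have hlen : ℓ (π (i :: t)) = t.length + 1 := by
      rw [hω]
      simp
    have hlent : ℓ (π t) = t.length := hred
    have hasc : ℓ ((π t)⁻¹) < ℓ ((π t)⁻¹ * s i) := by
      have h1 : (π t)⁻¹ * s i = (π (i :: t))⁻¹ := by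
        rw [wordProd_cons, mul_inv_rev, cs.inv_simple]
      rw [h1, cs.length_inv, cs.length_inv, hlen, hlent]
      omega
    rw [rootSeq_cons] at hv
    rcases List.mem_cons.mp hv with rfl | hv'
    · -- head
      constructor
      · exact pl_pos h hasc
      · have h2 : ρ (π (i :: t)) (ρ (π t)⁻¹ (e i)) = ρ (s i) (e i) := by
          rw [← Module.End.mul_apply, ← map_mul, wordProd_cons, mul_assoc,
            mul_inv_cancel, mul_one]
        rw [h2, rho_s_self h]
        exact neg_mem_phiNeg h (simple_mem_phiPos i)
    · -- tail
      obtain ⟨hpos, hneg⟩ := ih hred hv'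
      refine ⟨hpos, ?_⟩
      have hne : - ρ (π t) v ≠ e i := by
        intro heq
        have h3 : ρ (π t)⁻¹ (e i) = - v := by
          rw [← heq, map_neg, ← Module.End.mul_apply, ← map_mul, inv_mul_cancel,
            map_one]
          rfl
        have h4 : ρ (π t)⁻¹ (e i) ∈ PhiNeg ρ e := by
          rw [h3]
          exact neg_mem_phiNeg h hpos
        have h5 := (descent_iff h (π t)⁻¹ i).mpr h4
        omega
      have h6 : ρ (π (i :: t)) v = - (ρ (s i) (- ρ (π t) v)) := by
        rw [wordProd_cons, map_mul]
        simp only [Module.End.mul_apply]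
        rw [map_neg, neg_neg]
      rw [h6]
      exact neg_mem_phiNeg h (simple_perm h (neg_mem_phiPos h hneg) hne)

lemma mem_rootSeq_of_mem_invSet (h : IsGeometricRep cs e BF ρ) {ω : List B}
    (hω : cs.IsReduced ω) {v : V} (hv : v ∈ InvSet ρ e (π ω)) : v ∈ rootSeq cs ρ e ω := by
  induction ω with
  | nil =>
    exfalso
    obtain ⟨hpos, hneg⟩ := hv
    rw [wordProd_nil, map_one, Module.End.one_apply] at hneg
    exact pos_neg_disjoint h hpos hneg
  | cons i t ih =>
    have hred : cs.IsReduced t := by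
      have := hω.drop 1
      simpa using this
    obtain ⟨hpos, hneg⟩ := hv
    have hu : ρ (π t) v ∈ Phi ρ e := phi_inv h hpos.1 _
    rw [rootSeq_cons]
    rcases phi_pos_or_neg h hu with hup | hun
    · -- u = e i and v is the head
      have hueq : ρ (π t) v = e i := by
        by_contra hune
        have h7 : ρ (s i) (ρ (π t) v) ∈ PhiPos ρ e := simple_perm h hup hune
        have h8 : ρ (π (i :: t)) v = ρ (s i) (ρ (π t) v) := by
          rw [wordProd_cons, map_mul]
          rfl
        rw [← h8] at h7
        exact pos_neg_disjoint h h7 hneg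
      have h9 : v = ρ (π t)⁻¹ (e i) := by
        rw [← hueq, ← Module.End.mul_apply, ← map_mul, inv_mul_cancel, map_one]
        rfl
      rw [h9]
      exact List.mem_cons_self
    · exact List.mem_cons_of_mem _ (ih hred ⟨hpos, hun⟩)

lemma rootSeq_forall₂ (h : IsGeometricRep cs e BF ρ) (ω : List B) :
    List.Forall₂ (fun (t : W) (v : V) => ∀ x, ρ t x = x - (2 * BF v x) • v)
      (cs.rightInvSeq ω) (rootSeq cs ρ e ω) := by
  induction ω with
  | nil => exact List.Forall₂.nil
  | cons i t ih =>
    refine List.Forall₂.cons ?_ ih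
    intro x
    have := rho_conj_formula h (π t)⁻¹ i x
    rwa [inv_inv] at this
end Bridge
section Count

open Real CoxeterSystem List

variable {M : CoxeterMatrix B} {cs : CoxeterSystem M W} {e : Module.Basis B ℝ V}
  {BF : LinearMap.BilinForm ℝ V} {ρ : W →* V →ₗ[ℝ] V}

local prefix:100 "s" => cs.simple
local prefix:100 "π" => cs.wordProd
local prefix:100 "ℓ" => cs.length

lemma rootSeq_length (ω : List B) : (rootSeq cs ρ e ω).length = ω.length := by
  induction ω with
  | nil => rfl
  | cons i t ih => simp [rootSeq_cons, ih]

lemma rootSeq_nodup (h : IsGeometricRep cs e BF ρ) {ω : List B} (hω : cs.IsReduced ω) :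
    (rootSeq cs ρ e ω).Nodup := by
  have hris : (cs.rightInvSeq ω).Nodup := hω.nodup_rightInvSeq
  have hfa := rootSeq_forall₂ h ω
  obtain ⟨hlen, hpt⟩ := List.forall₂_iff_get.mp hfa
  rw [List.nodup_iff_injective_get] at hris ⊢
  intro a b hab
  have h1 := hpt a.1 (by omega) a.2
  have h2 := hpt b.1 (by omega) b.2
  rw [hab] at h1
  have h3 : (cs.rightInvSeq ω).get ⟨a.1, by omega⟩ = (cs.rightInvSeq ω).get ⟨b.1, by omega⟩ :=
    refl_eq_of_same_root h h1 h2
  have h4 := hris h3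
  exact Fin.ext (by simpa using congrArg Fin.val h4)

lemma invSet_eq_rootSeq_set (h : IsGeometricRep cs e BF ρ) {ω : List B}
    (hω : cs.IsReduced ω) : InvSet ρ e (π ω) = {v | v ∈ rootSeq cs ρ e ω} :=
  Set.ext fun _ => ⟨mem_rootSeq_of_mem_invSet h hω, mem_invSet_of_mem_rootSeq h hω⟩

lemma invSet_finite (h : IsGeometricRep cs e BF ρ) (w : W) : (InvSet ρ e w).Finite := by
  obtain ⟨ω, hω, rfl⟩ := cs.exists_reduced_word' w
  rw [invSet_eq_rootSeq_set h hω]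
  exact List.finite_toSet _

lemma invSet_ncard (h : IsGeometricRep cs e BF ρ) (w : W) :
    (InvSet ρ e w).ncard = ℓ w := by
  classical
  obtain ⟨ω, hω, rfl⟩ := cs.exists_reduced_word' w
  rw [invSet_eq_rootSeq_set h hω]
  have h1 : {v | v ∈ rootSeq cs ρ e ω} = ↑(rootSeq cs ρ e ω).toFinset := by
    ext v
    simp
  rw [h1, Set.ncard_coe_finset, List.toFinset_card_of_nodup (rootSeq_nodup h hω),
    rootSeq_length, hω]

lemma root_mem_invSet_of_inversion_aux (h : IsGeometricRep cs e BF ρ) {t : W} {v : V} (w : W)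
    (hv : v ∈ PhiPos ρ e) (hf : ∀ x, ρ t x = x - (2 * BF v x) • v)
    (hmem : v ∈ InvSet ρ e w) : ℓ (w * t) < ℓ w := by
  obtain ⟨ω, hω, rfl⟩ := cs.exists_reduced_word' w
  have hroot : v ∈ rootSeq cs ρ e ω := mem_rootSeq_of_mem_invSet h hω hmem
  obtain ⟨⟨k, hk⟩, hkeq⟩ := List.mem_iff_get.mp hroot
  obtain ⟨hlen, hpt⟩ := List.forall₂_iff_get.mp (rootSeq_forall₂ h ω)
  have h1 := hpt k (by omega) hk
  rw [hkeq] at h1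
  have h2 : (cs.rightInvSeq ω).get ⟨k, by omega⟩ = t := refl_eq_of_same_root h h1 hf
  have h3 : t ∈ cs.rightInvSeq ω := h2 ▸ List.get_mem _ _
  exact (cs.isRightInversion_of_mem_rightInvSeq hω h3).2

lemma root_mem_invSet_iff (h : IsGeometricRep cs e BF ρ) {t : W} {v : V} (w : W)
    (ht : cs.IsReflection t) (hv : v ∈ PhiPos ρ e)
    (hf : ∀ x, ρ t x = x - (2 * BF v x) • v) :
    v ∈ InvSet ρ e w ↔ ℓ (w * t) < ℓ w := by
  constructor
  · exact root_mem_invSet_of_inversion_aux h w hv hf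
  · intro hlt
    by_contra hnot
    have hneg' : ρ w v ∉ PhiNeg ρ e := fun hn => hnot ⟨hv, hn⟩
    have hwvpos : ρ w v ∈ PhiPos ρ e :=
      (phi_pos_or_neg h (phi_inv h hv.1 w)).resolve_right hneg'
    have hmem : v ∈ InvSet ρ e (w * t) := by
      refine ⟨hv, ?_⟩
      have h1 : ρ (w * t) v = - ρ w v := by
        rw [map_mul]
        simp only [Module.End.mul_apply]
        rw [refl_formula_self h (phi_unit h hv.1) hf, map_neg]
      rw [h1]
      exact neg_mem_phiNeg h hwvpos
    have h2 := root_mem_invSet_of_inversion_aux h (w * t) hv hf hmem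
    rw [mul_assoc, ht.mul_self, mul_one] at h2
    omega

lemma refl_root_spec (h : IsGeometricRep cs e BF ρ) {t : W} (ht : cs.IsReflection t) :
    (refl_exists_root h ht).choose ∈ PhiPos ρ e ∧
    ∀ x, ρ t x = x - (2 * BF (refl_exists_root h ht).choose x) • (refl_exists_root h ht).choose :=
  (refl_exists_root h ht).choose_spec

lemma inv_refl_set_image (h : IsGeometricRep cs e BF ρ) (w : W) :
    ∃ f : W → V, Set.InjOn f {t : W | cs.IsReflection t ∧ ℓ (w * t) < ℓ w} ∧
      f '' {t : W | cs.IsReflection t ∧ ℓ (w * t) < ℓ w} = InvSet ρ e w ∧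
      (∀ t (ht : cs.IsReflection t), f t ∈ PhiPos ρ e ∧
        (∀ x, ρ t x = x - (2 * BF (f t) x) • (f t))) := by
  classical
  refine ⟨fun t => if ht : cs.IsReflection t then (refl_exists_root h ht).choose else 0,
    ?_, ?_, ?_⟩
  · intro t ht t' ht' heq
    simp only [Set.mem_setOf_eq] at ht ht'
    simp only [dif_pos ht.1, dif_pos ht'.1] at heq
    exact refl_eq_of_same_root h (heq ▸ (refl_root_spec h ht.1).2) (refl_root_spec h ht'.1).2
  · ext v
    constructor
    · rintro ⟨t, ⟨ht, hlt⟩, rfl⟩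
      simp only [dif_pos ht]
      exact (root_mem_invSet_iff h w ht (refl_root_spec h ht).1 (refl_root_spec h ht).2).mpr hlt
    · intro hv
      obtain ⟨t, ht, hf⟩ := refl_of_root h hv.1
      refine ⟨t, ⟨ht, (root_mem_invSet_iff h w ht hv.1 hf).mp hv⟩, ?_⟩
      simp only [dif_pos ht]
      exact root_unique h (refl_root_spec h ht).1 hv.1 (refl_root_spec h ht).2 hf
  · intro t ht
    simp only [dif_pos ht]
    exact refl_root_spec h ht

lemma inv_refl_count (h : IsGeometricRep cs e BF ρ) (w : W) :
    {t : W | cs.IsReflection t ∧ ℓ (w * t) < ℓ w}.ncard = ℓ w := by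
  obtain ⟨f, hinj, himg, -⟩ := inv_refl_set_image h w
  rw [← Set.ncard_image_of_injOn hinj, himg, invSet_ncard h]

lemma inv_refl_finite (h : IsGeometricRep cs e BF ρ) (w : W) :
    {t : W | cs.IsReflection t ∧ ℓ (w * t) < ℓ w}.Finite := by
  obtain ⟨f, hinj, himg, -⟩ := inv_refl_set_image h w
  exact Set.Finite.of_finite_image (himg ▸ invSet_finite h w) hinj

end Count
section CountId

open Real CoxeterSystem List

variable {M : CoxeterMatrix B} {cs : CoxeterSystem M W} {e : Module.Basis B ℝ V}
  {BF : LinearMap.BilinForm ℝ V} {ρ : W →* V →ₗ[ℝ] V}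

local prefix:100 "s" => cs.simple
local prefix:100 "π" => cs.wordProd
local prefix:100 "ℓ" => cs.length

lemma pos_of_not_neg (h : IsGeometricRep cs e BF ρ) {v : V} (hv : v ∈ Phi ρ e)
    (hn : v ∉ PhiNeg ρ e) : v ∈ PhiPos ρ e :=
  (phi_pos_or_neg h hv).resolve_right hn

lemma neg_coords {v : V} (hv : v ∈ PhiNeg ρ e) (i : B) : e.repr v i ≤ 0 := by
  have := hv.2 i
  rw [map_neg] at this
  simp only [Finsupp.coe_neg, Pi.neg_apply] at this
  linarith

lemma mem_phiNeg_of_coords (h : IsGeometricRep cs e BF ρ) {v : V} (hv : v ∈ Phi ρ e)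
    (hc : ∀ i, e.repr v i ≤ 0) : v ∈ PhiNeg ρ e := by
  refine ⟨phi_neg h hv, fun i => ?_⟩
  rw [map_neg]
  simp only [Finsupp.coe_neg, Pi.neg_apply]
  linarith [hc i]

lemma invSet_closed (h : IsGeometricRep cs e BF ρ) {w : W} {x y z : V}
    (hx : x ∈ InvSet ρ e w) (hy : y ∈ InvSet ρ e w) {a b : ℝ} (ha : 0 ≤ a) (hb : 0 ≤ b)
    (hz : z ∈ Phi ρ e) (hzeq : z = a • x + b • y) : z ∈ InvSet ρ e w := by
  constructor
  · refine ⟨hz, fun i => ?_⟩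
    rw [hzeq]
    simp only [map_add, map_smul, Finsupp.coe_add, Finsupp.coe_smul, Pi.add_apply,
      Pi.smul_apply, smul_eq_mul]
    have := hx.1.2 i
    have := hy.1.2 i
    positivity
  · apply mem_phiNeg_of_coords h (phi_inv h hz w)
    intro i
    rw [hzeq]
    simp only [map_add, map_smul, Finsupp.coe_add, Finsupp.coe_smul, Pi.add_apply,
      Pi.smul_apply, smul_eq_mul]
    have h1 := neg_coords hx.2 i
    have h2 := neg_coords hy.2 i
    nlinarith

lemma invSet_coclosed (h : IsGeometricRep cs e BF ρ) {w : W} {x y μ : V}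
    (hμ : μ ∈ InvSet ρ e w) (hx : x ∈ PhiPos ρ e) (hy : y ∈ PhiPos ρ e) {c : ℝ}
    (hc : 0 < c) (hsum : x + y = c • μ) : x ∈ InvSet ρ e w ∨ y ∈ InvSet ρ e w := by
  by_contra hcon
  push_neg at hcon
  obtain ⟨hx', hy'⟩ := hcon
  have hxpos : ρ w x ∈ PhiPos ρ e :=
    pos_of_not_neg h (phi_inv h hx.1 w) (fun hn => hx' ⟨hx, hn⟩)
  have hypos : ρ w y ∈ PhiPos ρ e :=
    pos_of_not_neg h (phi_inv h hy.1 w) (fun hn => hy' ⟨hy, hn⟩)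
  have hzero : ∀ i, e.repr (ρ w (c • μ)) i = 0 := by
    intro i
    have h1 : ρ w (c • μ) = ρ w x + ρ w y := by
      rw [← map_add, hsum]
    have h2 : e.repr (ρ w (c • μ)) i ≤ 0 := by
      have hcoord := neg_coords hμ.2 i
      rw [map_smul, map_smul, Finsupp.smul_apply, smul_eq_mul]
      nlinarith
    have h3 : 0 ≤ e.repr (ρ w (c • μ)) i := by
      rw [h1]
      simp only [map_add, Finsupp.coe_add, Pi.add_apply]
      have := hxpos.2 i
      have := hypos.2 i
      linarith
    linarith
  have h4 : ρ w (c • μ) = 0 := by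
    apply e.repr.map_eq_zero_iff.mp
    ext i
    simp only [Finsupp.coe_zero, Pi.zero_apply]
    exact hzero i
  rw [map_smul] at h4
  rcases smul_eq_zero.mp h4 with h5 | h5
  · linarith
  · exact phi_ne_zero h (phi_inv h (phiPos_subset_phi hμ.1) w) h5

lemma rho_refl_invol (h : IsGeometricRep cs e BF ρ) {t : W} (ht : cs.IsReflection t) (x : V) :
    ρ t (ρ t x) = x := by
  rw [← Module.End.mul_apply, ← map_mul, ht.mul_self, map_one, Module.End.one_apply]

/-- The decomposition of `InvSet (w * t)`. -/
lemma invSet_mul_refl (h : IsGeometricRep cs e BF ρ) {t : W} (ht : cs.IsReflection t) (w : W) :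
    InvSet ρ e (w * t) =
      (ρ t '' (InvSet ρ e w \ InvSet ρ e t)) ∪
      (InvSet ρ e t \ ((fun x => - ρ t x) '' (InvSet ρ e w ∩ InvSet ρ e t))) := by
  ext γ
  constructor
  · rintro ⟨hγpos, hγneg⟩
    rw [map_mul] at hγneg
    simp only [Module.End.mul_apply] at hγneg
    by_cases hγT : γ ∈ InvSet ρ e t
    · right
      refine ⟨hγT, ?_⟩
      rintro ⟨x, ⟨hxA, hxT⟩, hxeq⟩
      have h1 : ρ t γ = - x := by
        rw [show γ = - ρ t x from hxeq.symm, map_neg, rho_refl_invol h ht]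
      rw [h1, map_neg] at hγneg
      exact pos_neg_disjoint h (neg_mem_phiPos h hxA.2) hγneg
    · left
      have h2 : ρ t γ ∈ PhiPos ρ e :=
        pos_of_not_neg h (phi_inv h hγpos.1 t) (fun hn => hγT ⟨hγpos, hn⟩)
      refine ⟨ρ t γ, ⟨⟨h2, hγneg⟩, ?_⟩, rho_refl_invol h ht γ⟩
      rintro ⟨-, hcon⟩
      rw [rho_refl_invol h ht] at hcon
      exact pos_neg_disjoint h hγpos hcon
  · rintro (⟨x, ⟨hxA, hxT⟩, rfl⟩ | ⟨hγT, hγni⟩)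
    · have hxpos : ρ t x ∈ PhiPos ρ e :=
        pos_of_not_neg h (phi_inv h hxA.1.1 t) (fun hn => hxT ⟨hxA.1, hn⟩)
      refine ⟨hxpos, ?_⟩
      rw [map_mul]
      simp only [Module.End.mul_apply]
      rw [rho_refl_invol h ht]
      exact hxA.2
    · refine ⟨hγT.1, ?_⟩
      rw [map_mul]
      simp only [Module.End.mul_apply]
      set x := - ρ t γ with hxdef
      have hxpos : x ∈ PhiPos ρ e := neg_mem_phiPos h hγT.2
      have hrtx : ρ t x = - γ := by
        rw [hxdef, map_neg, rho_refl_invol h ht]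
      by_cases hxA : x ∈ InvSet ρ e w
      · exfalso
        apply hγni
        refine ⟨x, ⟨hxA, ⟨hxpos, ?_⟩⟩, ?_⟩
        · rw [hrtx]
          exact neg_mem_phiNeg h hγT.1
        · show - ρ t x = γ
          rw [hrtx, neg_neg]
      · have h3 : ρ w x ∈ PhiPos ρ e :=
          pos_of_not_neg h (phi_inv h hxpos.1 w) (fun hn => hxA ⟨hxpos, hn⟩)
        have h4 : ρ t γ = - x := by rw [hxdef, neg_neg]
        rw [h4, map_neg]
        exact neg_mem_phiNeg h h3

/-- The counting identity. -/
lemma length_mul_refl_eq (h : IsGeometricRep cs e BF ρ) {t : W} (ht : cs.IsReflection t)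
    (w : W) :
    ℓ (w * t) + 2 * ((InvSet ρ e w ∩ InvSet ρ e t).ncard) = ℓ w + ℓ t := by
  classical
  have hAfin := invSet_finite h w
  have hTfin := invSet_finite h t
  have hinj : Function.Injective (ρ t) := by
    intro x y hxy
    have := congrArg (ρ t) hxy
    rwa [rho_refl_invol h ht, rho_refl_invol h ht] at this
  have hinj2 : Function.Injective (fun x => - ρ t x) := by
    intro x y hxy
    simp only [neg_inj] at hxy
    exact hinj hxy
  set A := InvSet ρ e w with hA
  set T := InvSet ρ e t with hT
  set img := (fun x => - ρ t x) '' (A ∩ T) with himgdef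
  have hsub_img : img ⊆ T := by
    rintro - ⟨x, ⟨hxA, hxT⟩, rfl⟩
    refine ⟨neg_mem_phiPos h hxT.2, ?_⟩
    rw [map_neg, rho_refl_invol h ht]
    exact neg_mem_phiNeg h hxT.1
  have hdisj : Disjoint (ρ t '' (A \ T)) (T \ img) := by
    rw [Set.disjoint_left]
    rintro - ⟨x, ⟨hxA, hxT⟩, rfl⟩ ⟨hmemT, -⟩
    have h1 : ρ t x ∈ PhiPos ρ e :=
      pos_of_not_neg h (phi_inv h hxA.1.1 t) (fun hn => hxT ⟨hxA.1, hn⟩)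
    have h2 := hmemT.2
    rw [rho_refl_invol h ht] at h2
    exact pos_neg_disjoint h hxA.1 h2
  have h1 : (InvSet ρ e (w * t)).ncard = (ρ t '' (A \ T)).ncard + (T \ img).ncard := by
    rw [invSet_mul_refl h ht w, Set.ncard_union_eq hdisj
      (hAfin.diff.image _) hTfin.diff]
  have h2 : (ρ t '' (A \ T)).ncard = (A \ T).ncard :=
    Set.ncard_image_of_injective _ hinj
  have h3 : (A \ (A ∩ T)).ncard + (A ∩ T).ncard = A.ncard :=
    Set.ncard_diff_add_ncard_of_subset Set.inter_subset_left hAfin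
  have h3' : A \ (A ∩ T) = A \ T := by
    ext x
    simp only [Set.mem_diff, Set.mem_inter_iff]
    tauto
  have h4 : img.ncard = (A ∩ T).ncard :=
    Set.ncard_image_of_injective _ hinj2
  have h5 : (T \ img).ncard + img.ncard = T.ncard :=
    Set.ncard_diff_add_ncard_of_subset hsub_img hTfin
  have h6 := invSet_ncard h (w * t)
  have h7 : A.ncard = ℓ w := by rw [hA]; exact invSet_ncard h w
  have h8 : T.ncard = ℓ t := by rw [hT]; exact invSet_ncard h t
  rw [h3'] at h3
  omega

/-- Involution pairing: upper bound. -/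
lemma pair_count_le {T C : Set V} {σ : V → V} {v : V} (hT : T.Finite)
    (hinv : ∀ x ∈ T, σ (σ x) = x) (hσC : ∀ x ∈ C, x ≠ v → σ x ∈ T)
    (hvC : v ∈ C) (hCT : C ⊆ T) (hnopair : ∀ x ∈ C, x ≠ v → σ x ∉ C) :
    2 * C.ncard ≤ T.ncard + 1 := by
  classical
  have hCfin : C.Finite := hT.subset hCT
  have hsub : σ '' (C \ {v}) ⊆ T \ C := by
    rintro - ⟨x, ⟨hxC, hxv⟩, rfl⟩
    simp only [Set.mem_singleton_iff] at hxv
    exact ⟨hσC x hxC hxv, hnopair x hxC hxv⟩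
  have hinjOn : Set.InjOn σ (C \ {v}) := by
    rintro x ⟨hxC, -⟩ y ⟨hyC, -⟩ hxy
    have := congrArg σ hxy
    rwa [hinv x (hCT hxC), hinv y (hCT hyC)] at this
  have h1 : (C \ {v}).ncard ≤ (T \ C).ncard := by
    rw [← Set.ncard_image_of_injOn hinjOn]
    exact Set.ncard_le_ncard hsub hT.diff
  have h2 : (C \ {v}).ncard + 1 = C.ncard := by
    rw [Set.ncard_diff_singleton_of_mem hvC]
    have : C.ncard ≠ 0 := Set.ncard_ne_zero_of_mem hvC hCfin
    omega
  have h3 : (T \ C).ncard + C.ncard = T.ncard :=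
    Set.ncard_diff_add_ncard_of_subset hCT hT
  omega

/-- Involution pairing: lower bound. -/
lemma pair_count_ge {T C : Set V} {σ : V → V} {v δ : V} (hT : T.Finite)
    (hinv : ∀ x ∈ T, σ (σ x) = x) (hfixv : σ v = v)
    (hvC : v ∈ C) (hCT : C ⊆ T) (hall : ∀ x ∈ T, x ∉ C → σ x ∈ C)
    (hδ : δ ∈ C) (hδv : δ ≠ v) (hσδ : σ δ ∈ C) (hσδδ : σ δ ≠ δ) :
    T.ncard + 3 ≤ 2 * C.ncard := by
  classical
  have hCfin : C.Finite := hT.subset hCT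
  have hσδv : σ δ ≠ v := by
    intro hcon
    apply hδv
    have := congrArg σ hcon
    rwa [hinv δ (hCT hδ), hfixv] at this
  have hsub : σ '' (T \ C) ⊆ C \ {v, δ, σ δ} := by
    rintro - ⟨x, ⟨hxT, hxC⟩, rfl⟩
    refine ⟨hall x hxT hxC, ?_⟩
    simp only [Set.mem_insert_iff, Set.mem_singleton_iff]
    push_neg
    refine ⟨?_, ?_, ?_⟩
    · intro hcon
      apply hxC
      have := congrArg σ hcon
      rw [hinv x hxT, hfixv] at this
      rw [this]
      exact hvC
    · intro hcon
      apply hxC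
      have := congrArg σ hcon
      rw [hinv x hxT] at this
      rw [this]
      exact hσδ
    · intro hcon
      apply hxC
      have := congrArg σ hcon
      rw [hinv x hxT, hinv δ (hCT hδ)] at this
      rw [this]
      exact hδ
  have hinjOn : Set.InjOn σ (T \ C) := by
    rintro x ⟨hxT, -⟩ y ⟨hyT, -⟩ hxy
    have := congrArg σ hxy
    rwa [hinv x hxT, hinv y hyT] at this
  have h1 : (T \ C).ncard ≤ (C \ {v, δ, σ δ}).ncard := by
    rw [← Set.ncard_image_of_injOn hinjOn]
    exact Set.ncard_le_ncard hsub hCfin.diff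
  have h2 : ({v, δ, σ δ} : Set V).ncard = 3 := by
    rw [Set.ncard_insert_of_notMem (by simp [hδv.symm, hσδv.symm])
      ((Set.finite_singleton _).insert _),
      Set.ncard_insert_of_notMem (by simp [hσδδ.symm]) (Set.finite_singleton _),
      Set.ncard_singleton]
  have hsub3 : ({v, δ, σ δ} : Set V) ⊆ C := by
    intro x hx
    rcases hx with rfl | rfl | rfl
    · exact hvC
    · exact hδ
    · exact hσδ
  have h3 : (C \ {v, δ, σ δ}).ncard + 3 = C.ncard := by
    rw [← h2]
    exact Set.ncard_diff_add_ncard_of_subset hsub3 hCfin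
  have h4 : (T \ C).ncard + C.ncard = T.ncard :=
    Set.ncard_diff_add_ncard_of_subset hCT hT
  omega

end CountId
section Core

open Real CoxeterSystem List

variable {M : CoxeterMatrix B} {cs : CoxeterSystem M W} {e : Module.Basis B ℝ V}
  {BF : LinearMap.BilinForm ℝ V} {ρ : W →* V →ₗ[ℝ] V}

local prefix:100 "s" => cs.simple
local prefix:100 "ℓ" => cs.length

lemma sum_pos_ne_zero (h : IsGeometricRep cs e BF ρ) {x y : V} (hx : x ∈ PhiPos ρ e)
    (hy : y ∈ PhiPos ρ e) : x + y ≠ 0 := by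
  intro h4
  have h5 : x = -y := by
    rw [← sub_eq_zero, sub_neg_eq_add, h4]
  exact pos_neg_disjoint h hx (h5 ▸ neg_mem_phiNeg h hy)

lemma pos_coeff (h : IsGeometricRep cs e BF ρ) {x y v : V} (hx : x ∈ PhiPos ρ e)
    (hy : y ∈ PhiPos ρ e) (hv : v ∈ PhiPos ρ e) {c : ℝ} (heq : x + y = c • v) : 0 < c := by
  by_contra hc
  push_neg at hc
  have hzero : ∀ i, e.repr (x + y) i = 0 := by
    intro i
    have h1 : 0 ≤ e.repr (x + y) i := by
      rw [map_add]
      simp only [Finsupp.coe_add, Pi.add_apply]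
      have := hx.2 i
      have := hy.2 i
      linarith
    have h2 : e.repr (x + y) i ≤ 0 := by
      rw [heq, map_smul, Finsupp.smul_apply, smul_eq_mul]
      have := hv.2 i
      nlinarith
    linarith
  apply sum_pos_ne_zero h hx hy
  apply e.repr.map_eq_zero_iff.mp
  ext i
  simp only [Finsupp.coe_zero, Pi.zero_apply]
  exact hzero i

/-- If `ρ t x = -x` for a positive root `x`, then `x` is the root of `t`. -/
lemma eq_root_of_refl_neg (h : IsGeometricRep cs e BF ρ) {t : W} {v x : V}
    (hv : v ∈ PhiPos ρ e) (hf : ∀ y, ρ t y = y - (2 * BF v y) • v)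
    (hx : x ∈ PhiPos ρ e) (heq : ρ t x = -x) : x = v := by
  have h4 : x - (2 * BF v x) • v = -x := by rw [← hf x, heq]
  have h6 : (2:ℝ) • (x - (BF v x) • v) = (x - (2 * BF v x) • v) + x := by module
  rw [h4, neg_add_cancel] at h6
  rcases smul_eq_zero.mp h6 with h7 | h7
  · norm_num at h7
  · rw [sub_eq_zero] at h7
    have hx' : (BF v x) • v ∈ PhiPos ρ e := by rw [← h7]; exact hx
    rw [h7]
    exact phiPos_smul_rigid h hv hx'

/-- the structure of `Φ(t)` under `x ↦ -ρ t x`. -/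
lemma sigma_props (h : IsGeometricRep cs e BF ρ) {t : W} (ht : cs.IsReflection t) {v : V}
    (hv : v ∈ PhiPos ρ e) (hf : ∀ y, ρ t y = y - (2 * BF v y) • v) :
    (∀ x ∈ InvSet ρ e t, - ρ t x ∈ InvSet ρ e t) ∧
    (∀ x : V, - ρ t (- ρ t x) = x) ∧
    (- ρ t v = v) ∧
    (v ∈ InvSet ρ e t) ∧
    (∀ x ∈ InvSet ρ e t, x + (- ρ t x) = (2 * BF v x) • v) := by
  have hrv : ρ t v = -v := refl_formula_self h (phi_unit h hv.1) hf
  refine ⟨?_, ?_, ?_, ?_, ?_⟩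
  · intro x hx
    refine ⟨neg_mem_phiPos h hx.2, ?_⟩
    rw [map_neg, rho_refl_invol h ht]
    exact neg_mem_phiNeg h hx.1
  · intro x
    rw [map_neg, rho_refl_invol h ht, neg_neg]
  · rw [hrv, neg_neg]
  · exact ⟨hv, by rw [hrv]; exact neg_mem_phiNeg h hv⟩
  · intro x hx
    rw [hf x]
    module

/-- Core of direction ⇐ : if no line of `Φ(w)` has ≥ 3 points then every inversion
is a cover. -/
lemma cover_of_no_three (h : IsGeometricRep cs e BF ρ) (w : W)
    (hline : ∀ α ∈ InvSet ρ e w, ∀ β ∈ InvSet ρ e w, α ≠ β →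
      ↑(Submodule.span ℝ ({α, β} : Set V)) ∩ InvSet ρ e w = {α, β})
    {t : W} (ht : cs.IsReflection t) (hlt : ℓ (w * t) < ℓ w) : ℓ (w * t) + 1 = ℓ w := by
  obtain ⟨v, hv, hf⟩ := refl_exists_root h ht
  obtain ⟨hσT, hσσ, hσv, hvT, hpair⟩ := sigma_props h ht hv hf
  have hvA : v ∈ InvSet ρ e w := (root_mem_invSet_iff h w ht hv hf).mpr hlt
  have hvC : v ∈ InvSet ρ e w ∩ InvSet ρ e t := ⟨hvA, hvT⟩
  have hnopair : ∀ x ∈ InvSet ρ e w ∩ InvSet ρ e t, x ≠ v →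
      - ρ t x ∉ InvSet ρ e w ∩ InvSet ρ e t := by
    rintro x ⟨hxA, hxT⟩ hxv ⟨hsxA, hsxT⟩
    have hsum := hpair x hxT
    have hcpos : 0 < 2 * BF v x := pos_coeff h hxT.1 (hσT x hxT).1 hv hsum
    have hxs : x ≠ - ρ t x := by
      intro hcon
      apply hxv
      apply eq_root_of_refl_neg h hv hf hxT.1
      rw [← neg_eq_iff_eq_neg, ← hcon]
    have hvspan : v ∈ (Submodule.span ℝ ({x, - ρ t x} : Set V) : Set V) := by
      have h1 : v = (2 * BF v x)⁻¹ • (x + - ρ t x) := by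
        rw [hsum, smul_smul, inv_mul_cancel₀ (ne_of_gt hcpos), one_smul]
      rw [SetLike.mem_coe, h1]
      apply Submodule.smul_mem
      apply Submodule.add_mem
      · exact Submodule.subset_span (by simp)
      · exact Submodule.subset_span (by simp)
    have h2 := hline x hxA (- ρ t x) hsxA hxs
    have h3 : v ∈ ({x, - ρ t x} : Set V) := by
      rw [← h2]
      exact ⟨hvspan, hvA⟩
    rcases h3 with rfl | h3
    · exact hxv rfl
    · simp only [Set.mem_singleton_iff] at h3
      apply hxv
      have h4 : x = - ρ t v := by rw [h3, hσσ x]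
      rw [h4, hσv]
  have hcount := pair_count_le (T := InvSet ρ e t) (C := InvSet ρ e w ∩ InvSet ρ e t)
    (σ := fun x => - ρ t x) (v := v) (invSet_finite h t)
    (fun x _ => hσσ x) (fun x hx _ => hσT x hx.2) hvC Set.inter_subset_right hnopair
  have hid := length_mul_refl_eq h ht w
  have hTcard := invSet_ncard h t
  omega

/-- Core of direction ⇒ : a positively-spanning triple in `Φ(w)` gives a non-cover
inversion. -/
lemma non_cover_of_triple (h : IsGeometricRep cs e BF ρ) (w : W) {δ μ ε : V} {c : ℝ}
    (hδ : δ ∈ InvSet ρ e w) (hμ : μ ∈ InvSet ρ e w) (hε : ε ∈ InvSet ρ e w)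
    (hδε : δ ≠ ε) (hsum : δ + ε = c • μ) :
    ∃ t, cs.IsReflection t ∧ ℓ (w * t) < ℓ w ∧ ℓ (w * t) + 1 ≠ ℓ w := by
  obtain ⟨t, ht, hf⟩ := refl_of_root h hμ.1
  obtain ⟨hσT, hσσ, hσv, hvT, hpair⟩ := sigma_props h ht hμ.1 hf
  have hcpos : 0 < c := pos_coeff h hδ.1 hε.1 hμ.1 hsum
  -- 2 * BF μ δ = c
  have hunitδ : BF δ δ = 1 := phi_unit h hδ.1.1
  have hunitε : BF ε ε = 1 := phi_unit h hε.1.1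
  have hunitμ : BF μ μ = 1 := phi_unit h hμ.1.1
  have hsym : BF δ ε = BF ε δ := bf_symm h δ ε
  have hc2 : c * c = 2 + 2 * BF δ ε := by
    have h1 : BF (δ + ε) (δ + ε) = c * c := by
      rw [hsum]
      simp only [map_smul, LinearMap.smul_apply, smul_eq_mul, hunitμ]
      ring
    simp only [map_add, LinearMap.add_apply] at h1
    rw [hunitδ, hunitε, hsym] at h1
    linarith
  have hbfμδ : 2 * BF μ δ = c := by
    have h1 : BF (δ + ε) δ = c * BF μ δ := by
      rw [hsum]
      simp only [map_smul, LinearMap.smul_apply, smul_eq_mul]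
    simp only [map_add, LinearMap.add_apply] at h1
    rw [hunitδ, ← hsym] at h1
    have h9 : c * (2 * BF μ δ - c) = 0 := by nlinarith [h1, hc2]
    rcases mul_eq_zero.mp h9 with h10 | h10
    · linarith
    · linarith
  have hrtδ : ρ t δ = - ε := by
    rw [hf δ, hbfμδ, ← hsum]
    module
  have hδT : δ ∈ InvSet ρ e t := ⟨hδ.1, by rw [hrtδ]; exact neg_mem_phiNeg h hε.1⟩
  have hσδ : - ρ t δ = ε := by rw [hrtδ, neg_neg]
  have hδμ : δ ≠ μ := by
    rintro rfl
    apply hδε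
    have h1 : ε = (c - 1) • δ := by
      have := hsum
      rw [sub_smul, one_smul, ← this]
      abel
    have h2 : (c - 1) • δ ∈ PhiPos ρ e := by rw [← h1]; exact hε.1
    rw [h1, phiPos_smul_rigid h hδ.1 h2]
  have hμC : μ ∈ InvSet ρ e w ∩ InvSet ρ e t := ⟨hμ, hvT⟩
  have hδC : δ ∈ InvSet ρ e w ∩ InvSet ρ e t := ⟨hδ, hδT⟩
  have hεT : ε ∈ InvSet ρ e t := by
    have := hσT δ hδT
    rwa [hσδ] at this
  have hεC : ε ∈ InvSet ρ e w ∩ InvSet ρ e t := ⟨hε, hεT⟩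
  have hall : ∀ x ∈ InvSet ρ e t, x ∉ InvSet ρ e w ∩ InvSet ρ e t →
      - ρ t x ∈ InvSet ρ e w ∩ InvSet ρ e t := by
    intro x hxT hxC
    have hsum' := hpair x hxT
    have hcpos' : 0 < 2 * BF μ x := pos_coeff h hxT.1 (hσT x hxT).1 hμ.1 hsum'
    have hor := invSet_coclosed h hμ hxT.1 (hσT x hxT).1 hcpos' hsum'
    rcases hor with hxA | hsxA
    · exact absurd ⟨hxA, hxT⟩ hxC
    · exact ⟨hsxA, hσT x hxT⟩
  have hcount := pair_count_ge (T := InvSet ρ e t) (C := InvSet ρ e w ∩ InvSet ρ e t)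
    (σ := fun x => - ρ t x) (v := μ) (δ := δ) (invSet_finite h t) (fun x _ => hσσ x) hσv hμC
    Set.inter_subset_right hall hδC hδμ (by show - ρ t δ ∈ _; rw [hσδ]; exact hεC)
    (by show - ρ t δ ≠ δ; rw [hσδ]; exact hδε.symm)
  have hid := length_mul_refl_eq h ht w
  have hTcard := invSet_ncard h t
  exact ⟨t, ht, by omega, by omega⟩

end Core
section PlanarAux

open Real CoxeterSystem

/-- determinant of two pairs -/
def det2 (x y : ℝ × ℝ) : ℝ := x.1 * y.2 - x.2 * y.1

lemma det2_cramer {x z : ℝ × ℝ} (h : det2 x z ≠ 0) (y : ℝ × ℝ) :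
    y = ((det2 y z / det2 x z) • x) + ((det2 x y / det2 x z) • z) := by
  unfold det2 at *
  have h1 : x.1 * z.2 - x.2 * z.1 ≠ 0 := h
  apply Prod.ext
  · simp only [Prod.fst_add, Prod.smul_fst, smul_eq_mul]
    rw [div_mul_eq_mul_div, div_mul_eq_mul_div, ← add_div, eq_div_iff h1]
    ring
  · simp only [Prod.snd_add, Prod.smul_snd, smul_eq_mul]
    rw [div_mul_eq_mul_div, div_mul_eq_mul_div, ← add_div, eq_div_iff h1]
    ring

lemma det2_swap (x y : ℝ × ℝ) : det2 x y = - det2 y x := by unfold det2; ring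

variable {B : Type*} {V : Type*} [AddCommGroup V] [Module ℝ V]

open Classical in
/-- coordinates of `ξ` with respect to the pair `(α, β)`. -/
noncomputable def pco (α β ξ : V) : ℝ × ℝ :=
  if h : ∃ a b : ℝ, ξ = a • α + b • β then (h.choose, h.choose_spec.choose) else 0

lemma pco_spec {α β ξ : V} (h : ∃ a b : ℝ, ξ = a • α + b • β) :
    ξ = (pco α β ξ).1 • α + (pco α β ξ).2 • β := by
  have h1 : pco α β ξ = (h.choose, h.choose_spec.choose) := dif_pos h
  rw [h1]
  exact h.choose_spec.choose_spec

/-- independence of the pair `(α, β)` -/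
def PIndep (α β : V) : Prop := ∀ a b : ℝ, a • α + b • β = 0 → a = 0 ∧ b = 0

lemma pco_unique {α β : V} (hind : PIndep α β) {ξ : V} {a b : ℝ}
    (hξ : ξ = a • α + b • β) : pco α β ξ = (a, b) := by
  have h1 : ∃ a b : ℝ, ξ = a • α + b • β := ⟨a, b, hξ⟩
  have h2 := pco_spec h1
  have h6 : (pco α β ξ).1 • α + (pco α β ξ).2 • β = a • α + b • β := by
    rw [← h2, ← hξ]
  have h3 : ((pco α β ξ).1 - a) • α + ((pco α β ξ).2 - b) • β = 0 := by
    rw [sub_smul, sub_smul, sub_add_sub_comm, h6, sub_self]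
  obtain ⟨h4, h5⟩ := hind _ _ h3
  apply Prod.ext <;> simp <;> linarith

lemma span_pair_iff {α β ξ : V} :
    ξ ∈ (Submodule.span ℝ ({α, β} : Set V) : Set V) ↔ ∃ a b : ℝ, ξ = a • α + b • β := by
  rw [SetLike.mem_coe, Submodule.mem_span_pair]
  constructor
  · rintro ⟨a, b, hab⟩
    exact ⟨a, b, hab.symm⟩
  · rintro ⟨a, b, hab⟩
    exact ⟨a, b, hab.symm⟩

lemma comb_of_pco {α β x z y : V} (hind : PIndep α β)
    (hx : ∃ a b : ℝ, x = a • α + b • β) (hz : ∃ a b : ℝ, z = a • α + b • β)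
    (hy : ∃ a b : ℝ, y = a • α + b • β) {u v : ℝ}
    (hco : pco α β y = u • pco α β x + v • pco α β z) :
    y = u • x + v • z := by
  have hxs := pco_spec hx
  have hzs := pco_spec hz
  have hys := pco_spec hy
  have h1 : (pco α β y).1 = u * (pco α β x).1 + v * (pco α β z).1 := by
    rw [hco]; simp [Prod.smul_fst]
  have h2 : (pco α β y).2 = u * (pco α β x).2 + v * (pco α β z).2 := by
    rw [hco]; simp [Prod.smul_snd]
  calc y = (pco α β y).1 • α + (pco α β y).2 • β := hys
    _ = (u * (pco α β x).1 + v * (pco α β z).1) • α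
        + (u * (pco α β x).2 + v * (pco α β z).2) • β := by rw [h1, h2]
    _ = u • ((pco α β x).1 • α + (pco α β x).2 • β)
        + v • ((pco α β z).1 • α + (pco α β z).2 • β) := by module
    _ = u • x + v • z := by rw [← hxs, ← hzs]

/-- sum of coefficients over a finite index set -/
noncomputable def fsum (e : Module.Basis B ℝ V) (J : Finset B) (ξ : V) : ℝ := ∑ i ∈ J, e.repr ξ i

lemma fsum_add (e : Module.Basis B ℝ V) (J : Finset B) (x y : V) :
    fsum e J (x + y) = fsum e J x + fsum e J y := by
  unfold fsum
  rw [← Finset.sum_add_distrib]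
  congr 1
  ext i
  rw [map_add]
  simp

lemma fsum_smul (e : Module.Basis B ℝ V) (J : Finset B) (c : ℝ) (x : V) :
    fsum e J (c • x) = c * fsum e J x := by
  unfold fsum
  rw [Finset.mul_sum]
  congr 1
  ext i
  rw [map_smul]
  simp

lemma fsum_neg (e : Module.Basis B ℝ V) (J : Finset B) (x : V) :
    fsum e J (-x) = - fsum e J x := by
  have := fsum_smul e J (-1) x
  simpa using this

lemma fsum_comb (e : Module.Basis B ℝ V) (J : Finset B) {α β ξ : V} (a b : ℝ)
    (hs : ξ = a • α + b • β) :
    fsum e J ξ = a * fsum e J α + b * fsum e J β := by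
  rw [hs, fsum_add, fsum_smul, fsum_smul]

end PlanarAux
section Planar

open Real CoxeterSystem

lemma det2_zero_imp {p q : ℝ × ℝ} (h : det2 p q = 0) (hp : p ≠ 0) : ∃ c : ℝ, q = c • p := by
  unfold det2 at h
  by_cases hp1 : p.1 = 0
  · have hp2 : p.2 ≠ 0 := by
      intro hp2
      exact hp (Prod.ext hp1 hp2)
    refine ⟨q.2 / p.2, Prod.ext ?_ ?_⟩
    · have hq1 : q.1 = 0 := by
        rw [hp1] at h
        have := mul_eq_zero.mp (by linarith : p.2 * q.1 = 0)
        tauto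
      simp [hq1, hp1]
    · simp only [Prod.smul_snd, smul_eq_mul]
      field_simp
  · refine ⟨q.1 / p.1, Prod.ext ?_ ?_⟩
    · simp only [Prod.smul_fst, smul_eq_mul]
      field_simp
    · simp only [Prod.smul_snd, smul_eq_mul]
      field_simp
      nlinarith [h]

variable {B : Type*} {W : Type*} [Group W] {V : Type*} [AddCommGroup V] [Module ℝ V]
variable {M : CoxeterMatrix B} {cs : CoxeterSystem M W} {e : Module.Basis B ℝ V}
  {BF : LinearMap.BilinForm ℝ V} {ρ : W →* V →ₗ[ℝ] V}

lemma sp_comb {α β x y : V} (hx : ∃ a b : ℝ, x = a • α + b • β)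
    (hy : ∃ a b : ℝ, y = a • α + b • β) (u v : ℝ) :
    ∃ a b : ℝ, u • x + v • y = a • α + b • β := by
  obtain ⟨x1, x2, hxs⟩ := hx
  obtain ⟨y1, y2, hys⟩ := hy
  refine ⟨u * x1 + v * y1, u * x2 + v * y2, ?_⟩
  rw [hxs, hys]
  module

lemma pco_comb {α β x y : V} (hind : PIndep α β) (hx : ∃ a b : ℝ, x = a • α + b • β)
    (hy : ∃ a b : ℝ, y = a • α + b • β) (u v : ℝ) :
    pco α β (u • x + v • y) =
      (u * (pco α β x).1 + v * (pco α β y).1, u * (pco α β x).2 + v * (pco α β y).2) := by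
  have hxs := pco_spec hx
  have hys := pco_spec hy
  apply pco_unique hind
  conv_lhs => rw [hxs, hys]
  module

/-- The planar lemma: 3 distinct coplanar roots in an inversion set give a positively
spanning triple. -/
lemma triple_of_coplanar (h : IsGeometricRep cs e BF ρ) (w : W) {α β γ : V}
    (hα : α ∈ InvSet ρ e w) (hβ : β ∈ InvSet ρ e w) (hγ : γ ∈ InvSet ρ e w)
    (hαβ : α ≠ β) (hγspan : ∃ a b : ℝ, γ = a • α + b • β)
    (hγα : γ ≠ α) (hγβ : γ ≠ β) :
    ∃ (δ μ ε' : V) (c : ℝ), δ ∈ InvSet ρ e w ∧ μ ∈ InvSet ρ e w ∧ ε' ∈ InvSet ρ e w ∧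
      δ ≠ ε' ∧ δ + ε' = c • μ := by
  classical
  -- independence
  have hind : PIndep α β := by
    intro a b hab
    by_cases hb : b = 0
    · subst hb
      rw [zero_smul, add_zero] at hab
      rcases smul_eq_zero.mp hab with ha | ha
      · exact ⟨ha, rfl⟩
      · exact absurd ha (phi_ne_zero h hα.1.1)
    · exfalso
      have hbeta : β = (-a/b) • α := by
        have h1 : b • β = -(a • α) := by
          rw [eq_neg_iff_add_eq_zero, add_comm]
          exact hab
        have h2 := congrArg (fun z => b⁻¹ • z) h1
        simp only [smul_smul, inv_mul_cancel₀ hb, one_smul, smul_neg] at h2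
        rw [h2, ← neg_smul]
        congr 1
        field_simp
      have h3 : (-a/b) • α ∈ PhiPos ρ e := by rw [← hbeta]; exact hβ.1
      apply hαβ
      have h4 := phiPos_smul_rigid h hα.1 h3
      rw [hbeta, h4]
  -- the functional f
  set J : Finset B := (e.repr α).support ∪ (e.repr β).support with hJ
  set f : V → ℝ := fsum e J with hfdef
  set SP : V → Prop := fun ξ => ∃ a b : ℝ, ξ = a • α + b • β with hSP
  have hSPα : SP α := ⟨1, 0, by module⟩
  have hSPβ : SP β := ⟨0, 1, by module⟩
  have hsupp : ∀ ξ, SP ξ → ∀ i, i ∉ J → e.repr ξ i = 0 := by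
    rintro ξ ⟨a, b, rfl⟩ i hi
    rw [hJ, Finset.mem_union] at hi
    push_neg at hi
    obtain ⟨h1, h2⟩ := hi
    rw [Finsupp.notMem_support_iff] at h1 h2
    rw [map_add, map_smul, map_smul]
    simp [h1, h2]
  have hfpos : ∀ ξ, SP ξ → ξ ∈ PhiPos ρ e → 0 < f ξ := by
    intro ξ hsp hξ
    have h1 : 0 ≤ f ξ := Finset.sum_nonneg (fun i _ => hξ.2 i)
    rcases h1.lt_or_eq with h2 | h2
    · exact h2
    · exfalso
      apply phi_ne_zero h hξ.1
      have h3 := (Finset.sum_eq_zero_iff_of_nonneg (fun i _ => hξ.2 i)).mp h2.symm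
      apply e.repr.map_eq_zero_iff.mp
      ext i
      simp only [Finsupp.coe_zero, Pi.zero_apply]
      by_cases hi : i ∈ J
      · exact h3 i hi
      · exact hsupp ξ hsp i hi
  have hSPneg : ∀ ξ, SP ξ → SP (-ξ) := by
    rintro ξ ⟨a, b, rfl⟩
    exact ⟨-a, -b, by module⟩
  have hfneg : ∀ ξ, SP ξ → ξ ∈ PhiNeg ρ e → f ξ < 0 := by
    intro ξ hsp hξ
    have h1 := hfpos (-ξ) (hSPneg ξ hsp) hξ
    rw [hfdef] at h1 ⊢
    rw [fsum_neg] at h1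
    linarith
  have hposf : ∀ ξ, ξ ∈ Phi ρ e → SP ξ → 0 < f ξ → ξ ∈ PhiPos ρ e := by
    intro ξ hξ hsp hfξ
    rcases phi_pos_or_neg h hξ with h1 | h1
    · exact h1
    · exact absurd (hfneg ξ hsp h1) (by linarith)
  -- coordinates and determinant
  set co : V → ℝ × ℝ := pco α β with hco
  set dd : V → V → ℝ := fun x y => det2 (co x) (co y) with hdd
  have hcone : ∀ ξ, SP ξ → ξ ∈ Phi ρ e → co ξ ≠ 0 := by
    intro ξ hsp hξ hzero
    apply phi_ne_zero h hξ
    have := pco_spec hsp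
    rw [hco] at hzero
    rw [hzero] at this
    simpa using this
  have hddne : ∀ x y, SP x → SP y → x ∈ PhiPos ρ e → y ∈ PhiPos ρ e → x ≠ y → dd x y ≠ 0 := by
    intro x y hspx hspy hx hy hxy hzero
    obtain ⟨c, hc⟩ := det2_zero_imp hzero (hcone x hspx hx.1)
    have h1 : y = c • x := by
      have hxs := pco_spec hspx
      have hys := pco_spec hspy
      rw [hys, hxs]
      have h2 : (co y).1 = c * (co x).1 := by rw [hc]; simp
      have h3 : (co y).2 = c * (co x).2 := by rw [hc]; simp
      rw [hco] at h2 h3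
      rw [h2, h3]
      module
    apply hxy
    have h4 : c • x ∈ PhiPos ρ e := by rw [← h1]; exact hy
    rw [h1, phiPos_smul_rigid h hx h4]
  have hfco : ∀ ξ, SP ξ → f ξ = (co ξ).1 * f α + (co ξ).2 * f β := by
    intro ξ hsp
    exact fsum_comb e J _ _ (pco_spec hsp)
  -- the order functional τ
  set τ : V → ℝ := fun ξ => (co ξ).2 / f ξ with hτ
  have hfα := hfpos α hSPα hα.1
  have hτd : ∀ x y, SP x → SP y → 0 < f x → 0 < f y →
      τ y - τ x = f α * dd x y / (f x * f y) := by
    intro x y hspx hspy hfx hfy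
    have hx0 : (co x).1 * f α + (co x).2 * f β ≠ 0 := by
      rw [← hfco x hspx]; exact ne_of_gt hfx
    have hy0 : (co y).1 * f α + (co y).2 * f β ≠ 0 := by
      rw [← hfco y hspy]; exact ne_of_gt hfy
    rw [hτ]
    simp only
    rw [hdd]
    simp only
    unfold det2
    rw [hfco x hspx, hfco y hspy]
    rw [div_sub_div _ _ hy0 hx0, div_eq_div_iff (mul_ne_zero hy0 hx0) (mul_ne_zero hx0 hy0)]
    ring
  have hbridge : ∀ x y, SP x → SP y → 0 < f x → 0 < f y → (τ x < τ y ↔ 0 < dd x y) := by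
    intro x y hspx hspy hfx hfy
    rw [← sub_pos, hτd x y hspx hspy hfx hfy]
    constructor
    · intro h1
      by_contra h2
      push_neg at h2
      have : f α * dd x y / (f x * f y) ≤ 0 := by
        apply div_nonpos_of_nonpos_of_nonneg
        · nlinarith
        · positivity
      linarith
    · intro h1
      positivity
  have hbridge_eq : ∀ x y, SP x → SP y → 0 < f x → 0 < f y → τ x = τ y → dd x y = 0 := by
    intro x y hspx hspy hfx hfy heq
    have h1 := hτd x y hspx hspy hfx hfy
    rw [heq, sub_self] at h1
    have h2 : f α * dd x y = 0 := by
      rw [eq_comm, div_eq_zero_iff] at h1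
      rcases h1 with h1 | h1
      · linarith [h1]
      · nlinarith
    rcases mul_eq_zero.mp h2 with h3 | h3
    · linarith
    · exact h3
  -- global linearity of f
  have hfadd : ∀ (u v : ℝ) (x y : V), f (u • x + v • y) = u * f x + v * f y := by
    intro u v x y
    rw [hfdef, fsum_add, fsum_smul, fsum_smul]
  have hfneg2 : ∀ x : V, f (-x) = - f x := fun x => fsum_neg e J x
  -- the finite set SS
  set Sig : Set V := {ξ | ξ ∈ InvSet ρ e w ∧ SP ξ} with hSig
  have hSigfin : Sig.Finite := (invSet_finite h w).subset (fun ξ hξ => hξ.1)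
  have hαSS : α ∈ Sig := ⟨hα, hSPα⟩
  have hβSS : β ∈ Sig := ⟨hβ, hSPβ⟩
  have hγSS : γ ∈ Sig := ⟨hγ, hγspan⟩
  have hSSpos : ∀ ξ ∈ Sig, ξ ∈ PhiPos ρ e := fun ξ hξ => hξ.1.1
  have hSSf : ∀ ξ ∈ Sig, 0 < f ξ := fun ξ hξ => hfpos ξ hξ.2 hξ.1.1
  have hτinj : ∀ x ∈ Sig, ∀ y ∈ Sig, τ x = τ y → x = y := by
    intro x hx y hy heq
    by_contra hne
    exact hddne x y hx.2 hy.2 (hSSpos x hx) (hSSpos y hy) hne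
      (hbridge_eq x y hx.2 hy.2 (hSSf x hx) (hSSf y hy) heq)
  obtain ⟨σ1, hσ1SS, hσ1min⟩ := Set.exists_min_image Sig τ hSigfin ⟨α, hαSS⟩
  have hne2 : (Sig \ {σ1}).Nonempty := by
    rcases eq_or_ne α σ1 with rfl | hne
    · exact ⟨β, hβSS, by simpa using hαβ.symm⟩
    · exact ⟨α, hαSS, by simpa using hne⟩
  obtain ⟨σ2, hσ2mem, hσ2min⟩ := Set.exists_min_image _ τ hSigfin.diff hne2
  obtain ⟨hσ2SS, hσ2ne1'⟩ := hσ2mem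
  have hσ2ne1 : σ2 ≠ σ1 := by simpa using hσ2ne1'
  have hne3 : (Sig \ {σ1, σ2}).Nonempty := by
    by_contra hemp
    rw [Set.not_nonempty_iff_eq_empty] at hemp
    have hsub : Sig ⊆ {σ1, σ2} := by
      intro ξ hξ
      by_contra hc
      have : ξ ∈ Sig \ {σ1, σ2} := ⟨hξ, hc⟩
      rw [hemp] at this
      exact this
    have h1 : α = σ1 ∨ α = σ2 := by simpa using hsub hαSS
    have h2 : β = σ1 ∨ β = σ2 := by simpa using hsub hβSS
    have h3 : γ = σ1 ∨ γ = σ2 := by simpa using hsub hγSS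
    rcases h1 with h1 | h1 <;> rcases h2 with h2 | h2 <;> rcases h3 with h3 | h3 <;>
      first
      | exact hαβ (h1.trans h2.symm)
      | exact hγα (h3.trans h1.symm)
      | exact hγβ (h3.trans h2.symm)
  obtain ⟨σ3, hσ3mem, hσ3min⟩ := Set.exists_min_image _ τ hSigfin.diff hne3
  obtain ⟨hσ3SS, hσ3ne'⟩ := hσ3mem
  have hσ3ne1 : σ3 ≠ σ1 := fun hc => hσ3ne' (by simp [hc])
  have hσ3ne2 : σ3 ≠ σ2 := fun hc => hσ3ne' (by simp [hc])
  -- accessors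
  have hσ1A := hσ1SS.1
  have hσ2A := hσ2SS.1
  have hσ3A := hσ3SS.1
  have hσ1sp := hσ1SS.2
  have hσ2sp := hσ2SS.2
  have hσ3sp := hσ3SS.2
  have hσ1pos := hσ1A.1
  have hσ2pos := hσ2A.1
  have hσ3pos := hσ3A.1
  have hσ1f := hSSf σ1 hσ1SS
  have hσ2f := hSSf σ2 hσ2SS
  have hσ3f := hSSf σ3 hσ3SS
  -- strict order
  have hτ12 : τ σ1 < τ σ2 :=
    lt_of_le_of_ne (hσ1min σ2 hσ2SS) (fun heq => hσ2ne1 ((hτinj σ1 hσ1SS σ2 hσ2SS heq).symm))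
  have hτ23 : τ σ2 < τ σ3 := by
    apply lt_of_le_of_ne (hσ2min σ3 ⟨hσ3SS, by simpa using hσ3ne1⟩)
    exact fun heq => hσ3ne2 ((hτinj σ2 hσ2SS σ3 hσ3SS heq).symm)
  have hdd12 : 0 < dd σ1 σ2 := (hbridge σ1 σ2 hσ1sp hσ2sp hσ1f hσ2f).mp hτ12
  have hdd23 : 0 < dd σ2 σ3 := (hbridge σ2 σ3 hσ2sp hσ3sp hσ2f hσ3f).mp hτ23
  have hdd13 : 0 < dd σ1 σ3 :=
    (hbridge σ1 σ3 hσ1sp hσ3sp hσ1f hσ3f).mp (hτ12.trans hτ23)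
  -- adjacency lemmas
  have hadj12 : ∀ ξ, ξ ∈ PhiPos ρ e → SP ξ → τ σ1 < τ ξ → τ ξ < τ σ2 → False := by
    intro ξ hξpos hξsp h1 h2
    have hfξ := hfpos ξ hξsp hξpos
    have hd1 : 0 < dd σ1 ξ := (hbridge σ1 ξ hσ1sp hξsp hσ1f hfξ).mp h1
    have hd2 : 0 < dd ξ σ2 := (hbridge ξ σ2 hξsp hσ2sp hfξ hσ2f).mp h2
    have hcram := det2_cramer (show det2 (co σ1) (co σ2) ≠ 0 from ne_of_gt hdd12) (co ξ)
    have hcomb := comb_of_pco hind hσ1sp hσ2sp hξsp hcram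
    have hu : 0 < det2 (co ξ) (co σ2) / det2 (co σ1) (co σ2) := div_pos hd2 hdd12
    have hv : 0 < det2 (co σ1) (co ξ) / det2 (co σ1) (co σ2) := div_pos hd1 hdd12
    have hξA : ξ ∈ InvSet ρ e w :=
      invSet_closed h hσ1A hσ2A (le_of_lt hu) (le_of_lt hv) hξpos.1 hcomb
    have hξSS : ξ ∈ Sig := ⟨hξA, hξsp⟩
    have hξne1 : ξ ≠ σ1 := fun hc => lt_irrefl _ (hc ▸ h1)
    have hξne2 : ξ ≠ σ2 := fun hc => lt_irrefl _ (hc ▸ h2)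
    have h3 := hσ3min ξ ⟨hξSS, by simp [hξne1, hξne2]⟩
    linarith
  have hadj23 : ∀ ξ, ξ ∈ PhiPos ρ e → SP ξ → τ σ2 < τ ξ → τ ξ < τ σ3 → False := by
    intro ξ hξpos hξsp h1 h2
    have hfξ := hfpos ξ hξsp hξpos
    have hd1 : 0 < dd σ2 ξ := (hbridge σ2 ξ hσ2sp hξsp hσ2f hfξ).mp h1
    have hd2 : 0 < dd ξ σ3 := (hbridge ξ σ3 hξsp hσ3sp hfξ hσ3f).mp h2
    have hdd' : 0 < dd σ2 σ3 := hdd23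
    have hcram := det2_cramer (show det2 (co σ2) (co σ3) ≠ 0 from ne_of_gt hdd23) (co ξ)
    have hcomb := comb_of_pco hind hσ2sp hσ3sp hξsp hcram
    have hu : 0 < det2 (co ξ) (co σ3) / det2 (co σ2) (co σ3) := div_pos hd2 hdd23
    have hv : 0 < det2 (co σ2) (co ξ) / det2 (co σ2) (co σ3) := div_pos hd1 hdd23
    have hξA : ξ ∈ InvSet ρ e w :=
      invSet_closed h hσ2A hσ3A (le_of_lt hu) (le_of_lt hv) hξpos.1 hcomb
    have hξSS : ξ ∈ Sig := ⟨hξA, hξsp⟩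
    have hξne1 : ξ ≠ σ1 := fun hc => by
      rw [hc] at h1
      linarith
    have hξne2 : ξ ≠ σ2 := fun hc => lt_irrefl _ (hc ▸ h1)
    have h3 := hσ3min ξ ⟨hξSS, by simp [hξne1, hξne2]⟩
    linarith
  -- reflection in σ2
  obtain ⟨t, ht, hf2⟩ := refl_of_root h hσ2pos
  have hrt2 : ρ t σ2 = -σ2 := refl_formula_self h (phi_unit h hσ2pos.1) hf2
  have hSPrt : ∀ x, SP x → SP (ρ t x) := by
    intro x hx
    obtain ⟨a1, b1, hcomb'⟩ := sp_comb (α := α) (β := β) hx hσ2sp 1 (-(2 * BF σ2 x))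
    refine ⟨a1, b1, ?_⟩
    rw [hf2 x, ← hcomb']
    module
  -- σ2 is between σ1 and σ3
  have hcram0 := det2_cramer (show det2 (co σ1) (co σ3) ≠ 0 from ne_of_gt hdd13) (co σ2)
  have hcomb0 := comb_of_pco hind hσ1sp hσ3sp hσ2sp hcram0
  have hu0 : 0 < det2 (co σ2) (co σ3) / det2 (co σ1) (co σ3) := div_pos hdd23 hdd13
  have hv0 : 0 < det2 (co σ1) (co σ2) / det2 (co σ1) (co σ3) := div_pos hdd12 hdd13
  have hζ1phi : ρ t σ1 ∈ Phi ρ e := phi_inv h hσ1pos.1 t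
  have hζ3phi : ρ t σ3 ∈ Phi ρ e := phi_inv h hσ3pos.1 t
  rcases phi_pos_or_neg h hζ1phi with hζ1pos | hζ1neg
  · -- ρ t σ1 positive ; then ρ t σ3 is negative
    have hζ3neg : ρ t σ3 ∈ PhiNeg ρ e := by
      rcases phi_pos_or_neg h hζ3phi with hζ3pos | hζ3neg
      swap
      · exact hζ3neg
      exfalso
      have heq1 : ρ t σ2 =
          (det2 (co σ2) (co σ3) / det2 (co σ1) (co σ3)) • ρ t σ1
          + (det2 (co σ1) (co σ2) / det2 (co σ1) (co σ3)) • ρ t σ3 := by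
        conv_lhs => rw [hcomb0]
        rw [map_add, map_smul, map_smul]
      have hf1 : f (ρ t σ2) < 0 := by
        rw [hrt2, hfneg2]
        linarith
      have hf2' : 0 < f (ρ t σ2) := by
        rw [heq1, hfadd]
        have := hfpos _ (hSPrt σ1 hσ1sp) hζ1pos
        have := hfpos _ (hSPrt σ3 hσ3sp) hζ3pos
        positivity
      linarith
    -- ε' := mirror of σ3
    set c' : ℝ := 2 * BF σ2 σ3 with hc'
    set ε' : V := c' • σ2 + (-1 : ℝ) • σ3 with hε'
    have hε'rt : - ρ t σ3 = ε' := by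
      rw [hf2 σ3, hε']
      module
    have hε'pos : ε' ∈ PhiPos ρ e := by
      rw [← hε'rt]
      exact neg_mem_phiPos h hζ3neg
    have hε'sp : SP ε' := sp_comb hσ2sp hσ3sp c' (-1)
    have hε'f := hfpos ε' hε'sp hε'pos
    have hsum3 : σ3 + ε' = c' • σ2 := by
      rw [hε']
      module
    have hc'pos : 0 < c' := pos_coeff h hσ3pos hε'pos hσ2pos hsum3
    have hcoε' : co ε' = (c' * (co σ2).1 + (-1) * (co σ3).1,
        c' * (co σ2).2 + (-1) * (co σ3).2) := by
      rw [hε', hco]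
      exact pco_comb hind hσ2sp hσ3sp c' (-1)
    have hddε'2 : dd ε' σ2 = dd σ2 σ3 := by
      rw [hdd]
      simp only
      rw [hcoε']
      unfold det2
      simp only
      ring
    have hτε'2 : τ ε' < τ σ2 :=
      (hbridge ε' σ2 hε'sp hσ2sp hε'f hσ2f).mpr (by rw [hddε'2]; exact hdd23)
    rcases lt_trichotomy (τ ε') (τ σ1) with hlt | heq | hgt
    · -- ε' < σ1 : contradiction via f of ρ t σ1
      exfalso
      have hddε'σ1 : 0 < dd ε' σ1 := (hbridge ε' σ1 hε'sp hσ1sp hε'f hσ1f).mp hlt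
      have hddε'σ2 : 0 < dd ε' σ2 := by rw [hddε'2]; exact hdd23
      have hcram := det2_cramer (show det2 (co ε') (co σ2) ≠ 0 from ne_of_gt hddε'σ2) (co σ1)
      have hcomb := comb_of_pco hind hε'sp hσ2sp hσ1sp hcram
      have hu : 0 < det2 (co σ1) (co σ2) / det2 (co ε') (co σ2) := div_pos hdd12 hddε'σ2
      have hv : 0 < det2 (co ε') (co σ1) / det2 (co ε') (co σ2) := div_pos hddε'σ1 hddε'σ2
      have hrtε' : ρ t ε' = - σ3 := by
        rw [← hε'rt, map_neg, rho_refl_invol h ht]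
      have heq1 : ρ t σ1 =
          (det2 (co σ1) (co σ2) / det2 (co ε') (co σ2)) • (- σ3)
          + (det2 (co ε') (co σ1) / det2 (co ε') (co σ2)) • (- σ2) := by
        conv_lhs => rw [hcomb]
        rw [map_add, map_smul, map_smul, hrtε', hrt2]
      have hf1 : 0 < f (ρ t σ1) := hfpos _ (hSPrt σ1 hσ1sp) hζ1pos
      have hf2' : f (ρ t σ1) < 0 := by
        rw [heq1, hfadd, hfneg2, hfneg2]
        nlinarith
      linarith
    · -- ε' = σ1 : done
      have hε'σ1 : ε' = σ1 := by
        by_contra hne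
        exact hddne ε' σ1 hε'sp hσ1sp hε'pos hσ1pos hne
          (hbridge_eq ε' σ1 hε'sp hσ1sp hε'f hσ1f heq)
      refine ⟨σ3, σ2, σ1, c', hσ3A, hσ2A, hσ1A, hσ3ne1, ?_⟩
      rw [← hε'σ1]
      exact hsum3
    · -- σ1 < ε' < σ2 : contradicts adjacency
      exact absurd (hadj12 ε' hε'pos hε'sp hgt hτε'2) (fun x => x)
  · -- CASE A : ρ t σ1 negative
    set c : ℝ := 2 * BF σ2 σ1 with hcdef
    set ε : V := c • σ2 + (-1 : ℝ) • σ1 with hε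
    have hεrt : - ρ t σ1 = ε := by
      rw [hf2 σ1, hε]
      module
    have hεpos : ε ∈ PhiPos ρ e := by
      rw [← hεrt]
      exact neg_mem_phiPos h hζ1neg
    have hεsp : SP ε := sp_comb hσ2sp hσ1sp c (-1)
    have hεf := hfpos ε hεsp hεpos
    have hsum1 : σ1 + ε = c • σ2 := by
      rw [hε]
      module
    have hcpos : 0 < c := pos_coeff h hσ1pos hεpos hσ2pos hsum1
    have hcoε : co ε = (c * (co σ2).1 + (-1) * (co σ1).1,
        c * (co σ2).2 + (-1) * (co σ1).2) := by
      rw [hε, hco]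
      exact pco_comb hind hσ2sp hσ1sp c (-1)
    have hdd2ε : dd σ2 ε = dd σ1 σ2 := by
      rw [hdd]
      simp only
      rw [hcoε]
      unfold det2
      simp only
      ring
    have hτ2ε : τ σ2 < τ ε :=
      (hbridge σ2 ε hσ2sp hεsp hσ2f hεf).mpr (by rw [hdd2ε]; exact hdd12)
    rcases lt_trichotomy (τ ε) (τ σ3) with hlt | heq | hgt
    · -- σ2 < ε < σ3 : contradicts adjacency
      exact absurd (hadj23 ε hεpos hεsp hτ2ε hlt) (fun x => x)
    · -- ε = σ3 : done
      have hεσ3 : ε = σ3 := by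
        by_contra hne
        exact hddne ε σ3 hεsp hσ3sp hεpos hσ3pos hne
          (hbridge_eq ε σ3 hεsp hσ3sp hεf hσ3f heq)
      refine ⟨σ1, σ2, σ3, c, hσ1A, hσ2A, hσ3A, fun hc13 => hσ3ne1 hc13.symm, ?_⟩
      rw [← hεσ3]
      exact hsum1
    · -- σ3 < ε : build a root strictly between σ1 and σ2
      exfalso
      have hdd3ε : 0 < dd σ3 ε := (hbridge σ3 ε hσ3sp hεsp hσ3f hεf).mp hgt
      have hdd2ε' : 0 < dd σ2 ε := by rw [hdd2ε]; exact hdd12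
      have hcram := det2_cramer (show det2 (co σ2) (co ε) ≠ 0 from ne_of_gt hdd2ε') (co σ3)
      have hcomb := comb_of_pco hind hσ2sp hεsp hσ3sp hcram
      set u' : ℝ := det2 (co σ3) (co ε) / det2 (co σ2) (co ε) with hu'def
      set v' : ℝ := det2 (co σ2) (co σ3) / det2 (co σ2) (co ε) with hv'def
      have hu' : 0 < u' := div_pos hdd3ε hdd2ε'
      have hv' : 0 < v' := div_pos hdd23 hdd2ε'
      have hrtε : ρ t ε = - σ1 := by
        rw [← hεrt, map_neg, rho_refl_invol h ht]
      set ζ : V := u' • σ2 + v' • σ1 with hζ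
      have hζrt : ρ t σ3 = - ζ := by
        conv_lhs => rw [hcomb]
        rw [map_add, map_smul, map_smul, hrtε, hrt2, hζ]
        module
      have hζphi : ζ ∈ Phi ρ e := by
        have h1 := phi_neg h hζ3phi
        rw [hζrt, neg_neg] at h1
        exact h1
      have hζsp : SP ζ := sp_comb hσ2sp hσ1sp u' v'
      have hζf : 0 < f ζ := by
        rw [hζ, hfadd]
        positivity
      have hζpos : ζ ∈ PhiPos ρ e := hposf ζ hζphi hζsp hζf
      have hcoζ : co ζ = (u' * (co σ2).1 + v' * (co σ1).1,
          u' * (co σ2).2 + v' * (co σ1).2) := by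
        rw [hζ, hco]
        exact pco_comb hind hσ2sp hσ1sp u' v'
      have hdd1ζ : dd σ1 ζ = u' * dd σ1 σ2 := by
        rw [hdd]
        simp only
        rw [hcoζ]
        unfold det2
        simp only
        ring
      have hddζ2 : dd ζ σ2 = v' * dd σ1 σ2 := by
        rw [hdd]
        simp only
        rw [hcoζ]
        unfold det2
        simp only
        ring
      have hτ1ζ : τ σ1 < τ ζ :=
        (hbridge σ1 ζ hσ1sp hζsp hσ1f hζf).mpr (by rw [hdd1ζ]; positivity)
      have hτζ2 : τ ζ < τ σ2 :=
        (hbridge ζ σ2 hζsp hσ2sp hζf hσ2f).mpr (by rw [hddζ2]; positivity)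
      exact hadj12 ζ hζpos hζsp hτ1ζ hτζ2

end Planar
section Assembly

open Real CoxeterSystem

variable {M : CoxeterMatrix B} {cs : CoxeterSystem M W} {e : Module.Basis B ℝ V}
  {BF : LinearMap.BilinForm ℝ V} {ρ : W →* V →ₗ[ℝ] V}

local prefix:100 "ℓ" => cs.length

lemma lhs_iff_covers (h : IsGeometricRep cs e BF ρ) (w : W) :
    {t : W | cs.IsReflection t ∧ ℓ (w * t) + 1 = ℓ w}.ncard = ℓ w ↔
      (∀ t, cs.IsReflection t → ℓ (w * t) < ℓ w → ℓ (w * t) + 1 = ℓ w) := by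
  have hS := inv_refl_count h w
  have hfin := inv_refl_finite h w
  constructor
  · intro hT t ht hlt
    have hsub : {t : W | cs.IsReflection t ∧ ℓ (w * t) + 1 = ℓ w} ⊆
        {t : W | cs.IsReflection t ∧ ℓ (w * t) < ℓ w} := by
      rintro t' ⟨h1, h2⟩
      exact ⟨h1, by omega⟩
    have heq := Set.eq_of_subset_of_ncard_le hsub (by rw [hS, hT]) hfin
    have hmem : t ∈ {t : W | cs.IsReflection t ∧ ℓ (w * t) + 1 = ℓ w} := by
      rw [heq]
      exact ⟨ht, hlt⟩
    exact hmem.2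
  · intro hall
    have heq : {t : W | cs.IsReflection t ∧ ℓ (w * t) + 1 = ℓ w} =
        {t : W | cs.IsReflection t ∧ ℓ (w * t) < ℓ w} := by
      ext t
      exact ⟨fun ⟨h1, h2⟩ => ⟨h1, by omega⟩, fun ⟨h1, h2⟩ => ⟨h1, hall t h1 h2⟩⟩
    rw [heq, hS]

lemma pindep_of_not_prop (h : IsGeometricRep cs e BF ρ) {α0 β0 : V}
    (hα0 : α0 ∈ Phi ρ e) (hnp : ¬∃ c : ℝ, β0 = c • α0) : PIndep α0 β0 := by
  intro a b hab
  by_cases hb : b = 0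
  · subst hb
    rw [zero_smul, add_zero] at hab
    rcases smul_eq_zero.mp hab with ha | ha
    · exact ⟨ha, rfl⟩
    · exact absurd ha (phi_ne_zero h hα0)
  · exfalso
    apply hnp
    refine ⟨-a/b, ?_⟩
    have h1 : b • β0 = -(a • α0) := by
      rw [eq_neg_iff_add_eq_zero, add_comm]
      exact hab
    have h2 := congrArg (fun z => b⁻¹ • z) h1
    simp only [smul_smul, inv_mul_cancel₀ hb, one_smul, smul_neg] at h2
    rw [h2, ← neg_smul]
    congr 1
    field_simp

lemma prop_rigid (h : IsGeometricRep cs e BF ρ) {x y : V} (hx : x ∈ PhiPos ρ e)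
    (hy : y ∈ PhiPos ρ e) {c : ℝ} (hc : y = c • x) : y = x := by
  have h1 : c • x ∈ PhiPos ρ e := by rw [← hc]; exact hy
  rw [hc]
  exact phiPos_smul_rigid h hx h1

lemma span_pair_swap (h : IsGeometricRep cs e BF ρ) {α0 β0 x y : V}
    (hα0 : α0 ∈ Phi ρ e) (hnp : ¬∃ c : ℝ, β0 = c • α0)
    (hx : x ∈ PhiPos ρ e) (hy : y ∈ PhiPos ρ e) (hxy : x ≠ y)
    (hxs : x ∈ (Submodule.span ℝ ({α0, β0} : Set V) : Set V))
    (hys : y ∈ (Submodule.span ℝ ({α0, β0} : Set V) : Set V)) :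
    (Submodule.span ℝ ({α0, β0} : Set V) : Set V) =
      (Submodule.span ℝ ({x, y} : Set V) : Set V) := by
  have hind : PIndep α0 β0 := pindep_of_not_prop h hα0 hnp
  have hxsp := span_pair_iff.mp hxs
  have hysp := span_pair_iff.mp hys
  have hxne : x ≠ 0 := phi_ne_zero h hx.1
  have hcox : pco α0 β0 x ≠ 0 := by
    intro hzero
    apply hxne
    have := pco_spec hxsp
    rw [hzero] at this
    simpa using this
  have hdet : det2 (pco α0 β0 x) (pco α0 β0 y) ≠ 0 := by
    intro hzero
    obtain ⟨c, hc⟩ := det2_zero_imp hzero hcox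
    apply hxy.symm
    apply prop_rigid h hx hy
    have hxs' := pco_spec hxsp
    have hys' := pco_spec hysp
    rw [hys', hxs']
    have h2 : (pco α0 β0 y).1 = c * (pco α0 β0 x).1 := by rw [hc]; simp
    have h3 : (pco α0 β0 y).2 = c * (pco α0 β0 x).2 := by rw [hc]; simp
    rw [h2, h3]
    module
  apply Set.eq_of_subset_of_subset
  · intro z hzs
    have hzsp := span_pair_iff.mp hzs
    have hcram := det2_cramer hdet (pco α0 β0 z)
    have hcomb := comb_of_pco hind hxsp hysp hzsp hcram
    apply span_pair_iff.mpr
    exact ⟨_, _, hcomb⟩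
  · intro z hzs
    obtain ⟨u, v, hz⟩ := span_pair_iff.mp hzs
    apply span_pair_iff.mpr
    obtain ⟨a1, b1, hx1⟩ := hxsp
    obtain ⟨a2, b2, hy1⟩ := hysp
    refine ⟨u * a1 + v * a2, u * b1 + v * b2, ?_⟩
    rw [hz, hx1, hy1]
    module

lemma invSet_subset_phiPos (w : W) : InvSet ρ e w ⊆ PhiPos ρ e := fun _ hz => hz.1

/-- RHS₂ → RHS₁ -/
lemma seglines_of_rhs2 (h : IsGeometricRep cs e BF ρ) (w : W)
    (hline : ∀ α ∈ InvSet ρ e w, ∀ β ∈ InvSet ρ e w, α ≠ β →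
      ↑(Submodule.span ℝ ({α, β} : Set V)) ∩ InvSet ρ e w = {α, β}) :
    ∀ L ∈ SegLines ρ e w, L.ncard = 2 := by
  rintro L ⟨⟨Ψ, ⟨α0, β0, hα0, hβ0, hnp, hΨeq⟩, hLeq⟩, x, hxL, y, hyL, hxy⟩
  have hxL' := hxL
  have hyL' := hyL
  rw [hLeq, hΨeq] at hxL' hyL'
  obtain ⟨⟨hxs, hxpos⟩, hxI⟩ := hxL'
  obtain ⟨⟨hys, hypos⟩, hyI⟩ := hyL'
  have hspan := span_pair_swap h hα0 hnp hxpos hypos hxy hxs hys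
  have hL2 : L = ↑(Submodule.span ℝ ({x, y} : Set V)) ∩ InvSet ρ e w := by
    rw [hLeq, hΨeq, ← hspan]
    ext z
    simp only [Set.mem_inter_iff, SetLike.mem_coe]
    constructor
    · rintro ⟨⟨h1, h2⟩, h3⟩
      exact ⟨h1, h3⟩
    · rintro ⟨h1, h3⟩
      exact ⟨⟨h1, h3.1⟩, h3⟩
  rw [hL2, hline x hxI y hyI hxy]
  exact Set.ncard_pair hxy

/-- RHS₁ → RHS₂ -/
lemma rhs2_of_seglines (h : IsGeometricRep cs e BF ρ) (w : W)
    (hseg : ∀ L ∈ SegLines ρ e w, L.ncard = 2) :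
    ∀ α ∈ InvSet ρ e w, ∀ β ∈ InvSet ρ e w, α ≠ β →
      ↑(Submodule.span ℝ ({α, β} : Set V)) ∩ InvSet ρ e w = {α, β} := by
  intro x hx y hy hxy
  have hnp : ¬∃ c : ℝ, y = c • x := by
    rintro ⟨c, hc⟩
    exact hxy.symm (prop_rigid h hx.1 hy.1 hc)
  set Ψ : Set V := ↑(Submodule.span ℝ ({x, y} : Set V)) ∩ PhiPos ρ e with hΨ
  have hLset : Ψ ∩ InvSet ρ e w = ↑(Submodule.span ℝ ({x, y} : Set V)) ∩ InvSet ρ e w := by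
    rw [hΨ]
    ext z
    simp only [Set.mem_inter_iff, SetLike.mem_coe]
    constructor
    · rintro ⟨⟨h1, h2⟩, h3⟩
      exact ⟨h1, h3⟩
    · rintro ⟨h1, h3⟩
      exact ⟨⟨h1, h3.1⟩, h3⟩
  have hxmem : x ∈ Ψ ∩ InvSet ρ e w := by
    rw [hLset]
    exact ⟨Submodule.subset_span (by simp), hx⟩
  have hymem : y ∈ Ψ ∩ InvSet ρ e w := by
    rw [hLset]
    exact ⟨Submodule.subset_span (by simp), hy⟩
  have hmem : (Ψ ∩ InvSet ρ e w) ∈ SegLines ρ e w := by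
    refine ⟨⟨Ψ, ⟨x, y, hx.1.1, hy.1.1, hnp, rfl⟩, rfl⟩, x, hxmem, y, hymem, hxy⟩
  have h2 := hseg _ hmem
  have hsub : ({x, y} : Set V) ⊆ Ψ ∩ InvSet ρ e w := by
    intro z hz
    rcases hz with rfl | hz
    · exact hxmem
    · rw [Set.mem_singleton_iff] at hz
      rw [hz]
      exact hymem
  have hfin : (Ψ ∩ InvSet ρ e w).Finite := (invSet_finite h w).subset Set.inter_subset_right
  have heq := Set.eq_of_subset_of_ncard_le hsub (by rw [h2, Set.ncard_pair hxy]) hfin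
  rw [← hLset, ← heq]

end Assembly
/-- `w` is fully covering (the number of reflections `t` with
`ℓ(wt) = ℓ(w) − 1` equals `ℓ(w)`) iff every line of the standard segment structure of
`Φ(w)` has exactly two points; equivalently, iff for every pair of distinct roots
`α, β ∈ Φ(w)` one has `span{α,β} ∩ Φ(w) = {α, β}`. -/
theorem fullyCovering_iff_lines_two_points
    {M : CoxeterMatrix B} (cs : CoxeterSystem M W) (e : Module.Basis B ℝ V)
    (BF : LinearMap.BilinForm ℝ V) (ρ : W →* V →ₗ[ℝ] V)
    (hgeo : IsGeometricRep cs e BF ρ) (w : W) :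
    (Set.ncard {t : W | cs.IsReflection t ∧ cs.length (w * t) + 1 = cs.length w}
          = cs.length w ↔
        ∀ L ∈ SegLines ρ e w, L.ncard = 2) ∧
      (Set.ncard {t : W | cs.IsReflection t ∧ cs.length (w * t) + 1 = cs.length w}
          = cs.length w ↔
        ∀ α ∈ InvSet ρ e w, ∀ β ∈ InvSet ρ e w, α ≠ β →
          ↑(Submodule.span ℝ ({α, β} : Set V)) ∩ InvSet ρ e w = {α, β}) := by
  have hiff2 : Set.ncard {t : W | cs.IsReflection t ∧ cs.length (w * t) + 1 = cs.length w}
      = cs.length w ↔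
      (∀ α ∈ InvSet ρ e w, ∀ β ∈ InvSet ρ e w, α ≠ β →
        ↑(Submodule.span ℝ ({α, β} : Set V)) ∩ InvSet ρ e w = {α, β}) := by
    rw [lhs_iff_covers hgeo w]
    constructor
    · intro hcov α hα β hβ hne
      apply Set.eq_of_subset_of_subset
      · rintro γ ⟨hγs, hγA⟩
        by_contra hγnot
        simp only [Set.mem_insert_iff, Set.mem_singleton_iff] at hγnot
        push_neg at hγnot
        obtain ⟨hγα, hγβ⟩ := hγnot
        obtain ⟨δ, μ, ε', c, hδ, hμ, hε, hδε, hsum⟩ :=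
          triple_of_coplanar hgeo w hα hβ hγA hne (span_pair_iff.mp hγs) hγα hγβ
        obtain ⟨t, ht, hlt, hne1⟩ := non_cover_of_triple hgeo w hδ hμ hε hδε hsum
        exact hne1 (hcov t ht hlt)
      · intro z hz
        rcases hz with rfl | hz
        · exact ⟨Submodule.subset_span (by simp), hα⟩
        · rw [Set.mem_singleton_iff] at hz
          rw [hz]
          exact ⟨Submodule.subset_span (by simp), hβ⟩
    · intro hline t ht hlt
      exact cover_of_no_three hgeo w hline ht hlt
  refine ⟨?_, hiff2⟩
  rw [hiff2]
  constructor
  · exact seglines_of_rhs2 hgeo w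
  · exact rhs2_of_seglines hgeo w
end

section
/- For all n, i, j ∈ ℤ and all a ∈ ℝ, U_i(a)·U_{n+i+j}(a) + U_j(a)·U_n(a) = U_{i+j}(a)·U_{n+i}(a). -/
private theorem pairInd (P : ℤ → Prop) (h0 : P 0) (h1 : P 1)
    (hup : ∀ k, P k → P (k + 1) → P (k + 2))
    (hdown : ∀ k, P k → P (k + 1) → P (k - 1)) : ∀ k, P k := by
  have key : ∀ k : ℤ, P k ∧ P (k + 1) := by
    intro k
    induction k using Int.induction_on with
    | zero => exact ⟨h0, h1⟩
    | succ k ih =>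
        exact ⟨ih.2, by rw [show (k : ℤ) + 1 + 1 = k + 2 by ring]; exact hup k ih.1 ih.2⟩
    | pred k ih =>
        exact ⟨hdown (-k) ih.1 ih.2, by rw [show -(k : ℤ) - 1 + 1 = -k by ring]; exact ih.1⟩
  exact fun k => (key k).1

/-- For all `n, i, j ∈ ℤ` and all `a ∈ ℝ`,
`U_i(a) U_{n+i+j}(a) + U_j(a) U_n(a) = U_{i+j}(a) U_{n+i}(a)` for the (shifted) Chebyshev
polynomials of the second kind. -/
theorem chebyshevU_product_identity
    (U : ℤ → ℝ → ℝ) (hU0 : ∀ x : ℝ, U 0 x = 0) (hU1 : ∀ x : ℝ, U 1 x = 1)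
    (hUrec : ∀ (n : ℤ) (x : ℝ), U (n + 2) x = 2 * x * U (n + 1) x - U n x) :
    ∀ (n i j : ℤ) (a : ℝ),
      U i a * U (n + i + j) a + U j a * U n a = U (i + j) a * U (n + i) a := by
  intro n i j a
  have hrec : ∀ s t u : ℤ, s = u + 2 → t = u + 1 →
      U s a = 2 * a * U t a - U u a := by
    rintro s t u rfl rfl; exact hUrec u a
  have hUm1 : U (-1) a = -1 := by
    have h := hrec 1 0 (-1) (by ring) (by ring)
    rw [hU0, hU1] at h; linarith
  -- addition formula
  have add : ∀ m k : ℤ, U (m + k) a = U m a * U (k + 1) a - U (m - 1) a * U k a := by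
    intro m
    apply pairInd (fun k => U (m + k) a = U m a * U (k + 1) a - U (m - 1) a * U k a)
    · rw [show (m : ℤ) + 0 = m by ring, show (0 : ℤ) + 1 = 1 by norm_num, hU1, hU0]; ring
    · have h := hrec (m + 1) m (m - 1) (by ring) (by ring)
      have h2 := hrec (1 + 1) 1 0 (by norm_num) (by norm_num)
      linear_combination h - U m a * h2 + (U (m - 1) a - 2 * a * U m a) * hU1 a + U m a * hU0 a
    · intro k ih1 ih2
      rw [show (k : ℤ) + 1 + 1 = k + 2 by ring] at ih2
      have r1 := hrec (m + (k + 2)) (m + (k + 1)) (m + k) (by ring) (by ring)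
      have r2 := hrec (k + 2 + 1) (k + 2) (k + 1) (by ring) (by ring)
      have r3 := hrec (k + 2) (k + 1) k (by ring) (by ring)
      linear_combination r1 + 2 * a * ih2 - ih1 - U m a * r2 + U (m - 1) a * r3
    · intro k ih1 ih2
      rw [show (k : ℤ) + 1 + 1 = k + 2 by ring] at ih2
      rw [show (k : ℤ) - 1 + 1 = k by ring]
      have r1 := hrec (m + (k + 1)) (m + k) (m + (k - 1)) (by ring) (by ring)
      have r2 := hrec (k + 1) k (k - 1) (by ring) (by ring)
      have r3 := hrec (k + 2) (k + 1) k (by ring) (by ring)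
      linear_combination r1 + 2 * a * ih1 - ih2 - U m a * r3 + U (m - 1) a * r2
  -- difference formula
  have diff : ∀ m k : ℤ, U (m - 1) a * U k a - U m a * U (k - 1) a = U (m - k) a := by
    intro m
    apply pairInd (fun k => U (m - 1) a * U k a - U m a * U (k - 1) a = U (m - k) a)
    · rw [show (0 : ℤ) - 1 = -1 by norm_num, show (m : ℤ) - 0 = m by ring, hU0, hUm1]; ring
    · rw [show (1 : ℤ) - 1 = 0 by norm_num, hU0, hU1]; ring
    · intro k ih1 ih2
      rw [show (k : ℤ) + 1 - 1 = k by ring] at ih2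
      rw [show (k : ℤ) + 2 - 1 = k + 1 by ring]
      have rk := hrec (k + 2) (k + 1) k (by ring) (by ring)
      have rk2 := hrec (k + 1) k (k - 1) (by ring) (by ring)
      have r3 := hrec (m - k) (m - (k + 1)) (m - (k + 2)) (by ring) (by ring)
      linear_combination U (m - 1) a * rk + 2 * a * ih2 - ih1 - r3 - U m a * rk2
    · intro k ih1 ih2
      rw [show (k : ℤ) + 1 - 1 = k by ring] at ih2
      rw [show (k : ℤ) - 1 - 1 = k - 2 by ring]
      have rA := hrec (m - (k - 1)) (m - k) (m - (k + 1)) (by ring) (by ring)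
      have rB := hrec (k + 1) k (k - 1) (by ring) (by ring)
      have rC := hrec k (k - 1) (k - 2) (by ring) (by ring)
      linear_combination (-1 : ℝ) * rA + 2 * a * ih1 - ih2 + U (m - 1) a * rB - U m a * rC
  have A1 : U (n + i + j) a = U (i + j) a * U (n + 1) a - U (i + j - 1) a * U n a := by
    have h := add (i + j) n
    rw [show i + j + n = n + i + j by ring] at h; exact h
  have A2 : U (n + i) a = U i a * U (n + 1) a - U (i - 1) a * U n a := by
    have h := add i n
    rw [show i + n = n + i by ring] at h; exact h
  have D : U (i + j - 1) a * U i a - U (i + j) a * U (i - 1) a = U j a := by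
    have h := diff (i + j) i
    rw [show i + j - i = j by ring] at h; exact h
  linear_combination U i a * A1 - U (i + j) a * A2 - U n a * D
end
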